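/- arXiv:1607.07803 — 3 statements merged into one kernel-verified Lean document; each statement's English description precedes it below -/
import Mathlib

section
/- Let (X,d,μ) be a metric measure space in which every ball has finite measure, satisfying non-degeneracy of balls (Axiom NDB) and the weak annular decay property (Axiom WAD), and let ℋ ⊆ L²(X,μ) be a reproducing kernel Hilbert space with kernel k satisfying the diagonal condition (Axiom D), weak localization (Axiom WL), and the homogeneous approximation property (Axiom HAP). If Λ ⊆ X is a set of stable sampling for ℋ (A‖f‖² ≤ Σ_{λ∈Λ} |f(λ)|² ≤ B‖f‖² for all f ∈ ℋ with A,B>0), then liminf_{r→∞} inf_{x∈X} #(Λ ∩ B_r(x)) / ∫_{B_r(x)} k(y,y) dμ(y) ≥ 1. -/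
open MeasureTheory Metric Filter Topology ENNReal

noncomputable section

/-- A reproducing kernel Hilbert space of functions contained in `L²(X,μ)`,
described by its carrier set of functions and its reproducing kernel `k`:
each `k_x = k(·,x)` belongs to the space and `f x = ⟨f, k_x⟩` (the `L²` inner
product) for every member `f`. -/
structure L2RKHS (X : Type*) [MeasurableSpace X] (μ : MeasureTheory.Measure X) where
  carrier : Set (X → ℂ)
  k : X → X → ℂ
  memL2 : ∀ f ∈ carrier, MemLp f 2 μ
  add_mem : ∀ f ∈ carrier, ∀ g ∈ carrier, f + g ∈ carrier
  smul_mem : ∀ (c : ℂ), ∀ f ∈ carrier, c • f ∈ carrier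
  kernel_mem : ∀ x : X, (fun y => k y x) ∈ carrier
  reproducing : ∀ f ∈ carrier, ∀ x : X, f x = ∫ y, f y * (starRingEnd ℂ) (k y x) ∂μ

variable {X : Type*} [MeasurableSpace X] [MetricSpace X]

/-- Every ball has finite measure. -/
def FiniteBalls (μ : Measure X) : Prop := ∀ (x : X) (r : ℝ), μ (ball x r) ≠ ∞

/-- Axiom (NDB): non-degeneracy of balls. -/
def NDB (μ : Measure X) : Prop := ∃ r : ℝ, 0 < r ∧ 0 < ⨅ x : X, μ (ball x r)

/-- Axiom (WAD): the weak annular decay property. -/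
def WAD (μ : Measure X) : Prop :=
  Tendsto (fun r : ℝ => ⨆ x : X, μ (ball x (r + 1) \ ball x r) / μ (ball x r)) atTop (𝓝 0)

/-- The lower Beurling density `D⁻(Λ)`. -/
def lowerDensity (μ : Measure X) (Λ : Set X) : ℝ≥0∞ :=
  liminf (fun r : ℝ => ⨅ x : X, Measure.count (Λ ∩ ball x r) / μ (ball x r)) atTop

/-- The upper Beurling density `D⁺(Λ)`. -/
def upperDensity (μ : Measure X) (Λ : Set X) : ℝ≥0∞ :=
  limsup (fun r : ℝ => ⨆ x : X, Measure.count (Λ ∩ ball x r) / μ (ball x r)) atTop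

/-- The lower averaged trace `tr⁻(k)` of a reproducing kernel. -/
def lowerTrace (μ : Measure X) (k : X → X → ℂ) : ℝ≥0∞ :=
  liminf (fun r : ℝ =>
    ⨅ x : X, (∫⁻ y in ball x r, ENNReal.ofReal ((k y y).re) ∂μ) / μ (ball x r)) atTop

/-- The upper averaged trace `tr⁺(k)` of a reproducing kernel. -/
def upperTrace (μ : Measure X) (k : X → X → ℂ) : ℝ≥0∞ :=
  limsup (fun r : ℝ =>
    ⨆ x : X, (∫⁻ y in ball x r, ENNReal.ofReal ((k y y).re) ∂μ) / μ (ball x r)) atTop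

variable {μ : Measure X}

/-- Axiom (D): two-sided bounds on the diagonal of the kernel. -/
def L2RKHS.AxiomD (H : L2RKHS X μ) : Prop :=
  ∃ C₁ C₂ : ℝ, 0 < C₁ ∧ 0 < C₂ ∧ ∀ x : X, C₁ ≤ (H.k x x).re ∧ (H.k x x).re ≤ C₂

/-- Axiom (WL): weak localization of the kernel. -/
def L2RKHS.WL (H : L2RKHS X μ) : Prop :=
  ∀ ε : ℝ, 0 < ε → ∃ r : ℝ, ∀ x : X,
    (∫⁻ y in (ball x r)ᶜ, (‖H.k x y‖₊ : ℝ≥0∞) ^ 2 ∂μ) < ENNReal.ofReal (ε ^ 2)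

/-- `{k_λ : λ ∈ Λ}` is a Bessel sequence for `H`. -/
def L2RKHS.Bessel (H : L2RKHS X μ) (Λ : Set X) : Prop :=
  ∃ C : ℝ, 0 < C ∧ ∀ f ∈ H.carrier,
    ∑' lam : Λ, (‖f lam‖₊ : ℝ≥0∞) ^ 2 ≤
      ENNReal.ofReal C * ∫⁻ y, (‖f y‖₊ : ℝ≥0∞) ^ 2 ∂μ

/-- Axiom (HAP): the homogeneous approximation property. -/
def L2RKHS.HAP (H : L2RKHS X μ) : Prop :=
  ∀ Λ : Set X, H.Bessel Λ → ∀ ε : ℝ, 0 < ε → ∃ r : ℝ, ∀ x : X,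
    ∑' lam : ↥(Λ \ ball x r), (‖H.k x lam‖₊ : ℝ≥0∞) ^ 2 < ENNReal.ofReal (ε ^ 2)

/-- `Λ` is a set of stable sampling for `H`. -/
def L2RKHS.Sampling (H : L2RKHS X μ) (Λ : Set X) : Prop :=
  ∃ A B : ℝ, 0 < A ∧ 0 < B ∧ ∀ f ∈ H.carrier,
    ENNReal.ofReal A * (∫⁻ y, (‖f y‖₊ : ℝ≥0∞) ^ 2 ∂μ) ≤ ∑' lam : Λ, (‖f lam‖₊ : ℝ≥0∞) ^ 2 ∧
    ∑' lam : Λ, (‖f lam‖₊ : ℝ≥0∞) ^ 2 ≤ ENNReal.ofReal B * ∫⁻ y, (‖f y‖₊ : ℝ≥0∞) ^ 2 ∂μ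

/-- `{k_λ : λ ∈ Λ}` is a Riesz sequence in `H` (equivalently stated via finitely
supported coefficient sequences). -/
def L2RKHS.RieszSeq (H : L2RKHS X μ) (Λ : Set X) : Prop :=
  ∃ A B : ℝ, 0 < A ∧ 0 < B ∧ ∀ (F : Finset Λ) (c : Λ → ℂ),
    A * ∑ lam ∈ F, ‖c lam‖ ^ 2 ≤ (∫ y, ‖∑ lam ∈ F, c lam * H.k y lam‖ ^ 2 ∂μ) ∧
    (∫ y, ‖∑ lam ∈ F, c lam * H.k y lam‖ ^ 2 ∂μ) ≤ B * ∑ lam ∈ F, ‖c lam‖ ^ 2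

/-- `Λ` is relatively separated. -/
def RelSeparated (μ : Measure X) (Λ : Set X) : Prop :=
  ∃ ρ₀ : ℝ, 0 < ρ₀ ∧ ∀ ρ : ℝ, ρ₀ ≤ ρ → ∃ C : ℝ, 0 < C ∧ ∀ x : X,
    Measure.count (Λ ∩ ball x ρ) ≤ ENNReal.ofReal C * μ (ball x ρ)

attribute [-instance] WithCStarModule.instCStarModuleComplex

section Auxiliary

open scoped InnerProductSpace ComplexConjugate

namespace SDDFAux

variable {α : Type*} [MeasurableSpace α] {ν : Measure α}

/-- Integral of a function supported outside `t` with respect to `ν.restrict t`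
vanishes, even for non-measurable `t`. -/
lemma lintegral_indicator_compl_restrict (ν : Measure α) (t : Set α) (f : α → ℝ≥0∞) :
    ∫⁻ z, (tᶜ).indicator f z ∂(ν.restrict t) = 0 := by
  rw [MeasureTheory.lintegral]
  refine le_antisymm (iSup₂_le fun g hg => ?_) (zero_le)
  rw [MeasureTheory.SimpleFunc.lintegral]
  refine le_of_eq (Finset.sum_eq_zero fun y hy => ?_)
  rcases eq_or_ne y 0 with rfl | hy0
  · exact zero_mul _
  · have hsub : g ⁻¹' {y} ∩ t = ∅ := by
      ext z
      simp only [Set.mem_inter_iff, Set.mem_preimage, Set.mem_singleton_iff, Set.mem_empty_iff_false,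
        iff_false, not_and]
      intro hgz hzt
      have hle := hg z
      have h0 : tᶜ.indicator f z = 0 := Set.indicator_of_notMem (by simpa using hzt) f
      simp only [h0] at hle
      exact hy0 (le_antisymm (hgz ▸ hle) (zero_le))
    rw [Measure.restrict_apply (g.measurableSet_preimage _), hsub, measure_empty, mul_zero]

/-- A lower bound for the counting measure of an arbitrary (possibly
non-measurable) set in terms of the cardinality of a finite subset. -/
lemma card_le_count {s : Set α} (t : Finset α) (h : ↑t ⊆ s) :
    (t.card : ℝ≥0∞) ≤ Measure.count s := by
  classical
  rw [measure_eq_iInf]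
  refine le_iInf fun u => le_iInf fun hsu => le_iInf fun hu => ?_
  rw [Measure.count_apply hu, ← ENNReal.tsum_set_one]
  have htu : ∀ x ∈ t, x ∈ u := fun x hx => hsu (h hx)
  set g : {x // x ∈ t} → u := fun x => ⟨x.1, htu x.1 x.2⟩ with hgdef
  have hginj : Function.Injective g := by
    intro a b hab
    exact Subtype.ext (by simpa [hgdef] using congrArg Subtype.val hab)
  have hcard : (t.attach.image g).card = t.card := by
    rw [Finset.card_image_of_injective _ hginj, Finset.card_attach]
  calc (t.card : ℝ≥0∞) = ∑ _y ∈ t.attach.image g, (1 : ℝ≥0∞) := by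
        rw [Finset.sum_const, hcard]; simp
    _ ≤ ∑' _ : u, (1 : ℝ≥0∞) := ENNReal.sum_le_tsum _

/-- `∫⁻ ‖f‖₊ ^ 2 = ‖f‖ ^ 2` for an `L²` element. -/
lemma lintegral_nnnorm_sq (f : MeasureTheory.Lp ℂ 2 ν) :
    ∫⁻ a, (‖f a‖₊ : ℝ≥0∞) ^ 2 ∂ν = ENNReal.ofReal (‖f‖ ^ 2) := by
  have h := MeasureTheory.eLpNorm_eq_lintegral_rpow_enorm_toReal (f := ⇑f) (μ := ν)
      two_ne_zero ENNReal.ofNat_ne_top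
  have h2 : (2 : ℝ≥0∞).toReal = (2 : ℝ) := by simp
  rw [h2] at h
  simp only [enorm_eq_nnnorm] at h
  have hrpow : ∀ a : α, (‖f a‖₊ : ℝ≥0∞) ^ (2 : ℝ) = (‖f a‖₊ : ℝ≥0∞) ^ (2 : ℕ) := by
    intro a
    rw [show ((2:ℝ)) = ((2:ℕ) : ℝ) by norm_num, ENNReal.rpow_natCast]
  have hIeq : eLpNorm (⇑f) 2 ν ^ (2 : ℕ) = ∫⁻ a, (‖f a‖₊ : ℝ≥0∞) ^ 2 ∂ν := by
    rw [h]
    simp_rw [hrpow] at *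
    rw [← ENNReal.rpow_natCast (_ ^ (1/2 : ℝ)) 2, ← ENNReal.rpow_mul]
    norm_num
  have hne : eLpNorm (⇑f) 2 ν ≠ ∞ := (MeasureTheory.Lp.eLpNorm_lt_top f).ne
  rw [← hIeq, MeasureTheory.Lp.norm_def, ← ENNReal.toReal_pow, ENNReal.ofReal_toReal]
  exact ENNReal.pow_ne_top hne

end SDDFAux
end Auxiliary
section Setup
set_option linter.unusedSectionVars false

open scoped InnerProductSpace ComplexConjugate
open SDDFAux

namespace SDDFAux

variable {X : Type*} [MeasurableSpace X] [MetricSpace X] {μ : Measure X}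

variable (H : L2RKHS X μ)

/-- The kernel element `k_z` as an element of `L²`. -/
def Kfun (z : X) : MeasureTheory.Lp ℂ 2 μ :=
  (H.memL2 _ (H.kernel_mem z)).toLp _

variable [Nonempty X]

omit [MetricSpace X] in
lemma zero_fun_mem : (fun _ : X => (0 : ℂ)) ∈ H.carrier := by
  obtain ⟨x⟩ := ‹Nonempty X›
  have h := H.smul_mem 0 _ (H.kernel_mem x)
  have : (0 : ℂ) • (fun y => H.k y x) = fun _ : X => (0 : ℂ) := by
    funext y; simp
  rwa [this] at h

/-- The image of the carrier inside `L²`, as a submodule. -/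
def Hsub : Submodule ℂ (MeasureTheory.Lp ℂ 2 μ) where
  carrier := {F | ∃ f : X → ℂ, ∃ hf : f ∈ H.carrier, F = (H.memL2 f hf).toLp f}
  add_mem' := by
    rintro F G ⟨f, hf, rfl⟩ ⟨g, hg, rfl⟩
    exact ⟨f + g, H.add_mem f hf g hg, (MeasureTheory.MemLp.toLp_add _ _).symm⟩
  zero_mem' := by
    refine ⟨fun _ => 0, zero_fun_mem H, ?_⟩
    exact (MeasureTheory.MemLp.toLp_zero _).symm
  smul_mem' := by
    rintro c F ⟨f, hf, rfl⟩
    exact ⟨c • f, H.smul_mem c f hf, (MeasureTheory.MemLp.toLp_const_smul c _).symm⟩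

/-- The closure of the carrier in `L²`. -/
def Hcl : Submodule ℂ (MeasureTheory.Lp ℂ 2 μ) := (Hsub H).topologicalClosure

lemma isClosed_Hcl : IsClosed ((Hcl H : Set (MeasureTheory.Lp ℂ 2 μ))) :=
  Submodule.isClosed_topologicalClosure _

instance : CompleteSpace (Hcl H) := (isClosed_Hcl H).completeSpace_coe

lemma Kfun_mem_Hsub (z : X) : Kfun H z ∈ Hsub H :=
  ⟨fun y => H.k y z, H.kernel_mem z, rfl⟩

lemma Kfun_mem_Hcl (z : X) : Kfun H z ∈ Hcl H :=
  Submodule.le_topologicalClosure _ (Kfun_mem_Hsub H z)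

/-- The kernel element as a member of the closed subspace. -/
def ev (z : X) : Hcl H := ⟨Kfun H z, Kfun_mem_Hcl H z⟩

lemma reproducing_inner {f : X → ℂ} (hf : f ∈ H.carrier) (z : X) :
    f z = ⟪Kfun H z, (H.memL2 f hf).toLp f⟫_ℂ := by
  have h1 : ∫ y, ⟪(Kfun H z) y, ((H.memL2 f hf).toLp f) y⟫_ℂ ∂μ
      = ∫ y, f y * (starRingEnd ℂ) (H.k y z) ∂μ := by
    apply MeasureTheory.integral_congr_ae
    filter_upwards [MeasureTheory.MemLp.coeFn_toLp (H.memL2 _ (H.kernel_mem z)),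
      MeasureTheory.MemLp.coeFn_toLp (H.memL2 f hf)] with y e1 e2
    rw [e2, RCLike.inner_apply, show ((Kfun H z) y) = H.k y z from e1]
  rw [H.reproducing f hf z, MeasureTheory.L2.inner_def, h1]

lemma kernel_inner (z w : X) : H.k w z = ⟪Kfun H w, Kfun H z⟫_ℂ :=
  reproducing_inner H (H.kernel_mem z) w

lemma kernel_conj (z w : X) : H.k z w = (starRingEnd ℂ) (H.k w z) := by
  rw [kernel_inner H w z, kernel_inner H z w, ← inner_conj_symm]

lemma kernel_diag (z : X) : H.k z z = ((‖Kfun H z‖ ^ 2 : ℝ) : ℂ) := by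
  rw [kernel_inner H z z, inner_self_eq_norm_sq_to_K]
  norm_num

lemma kernel_diag_re (z : X) : (H.k z z).re = ‖Kfun H z‖ ^ 2 := by
  rw [kernel_diag H z, Complex.ofReal_re]

lemma Hsub_pointwise {G : MeasureTheory.Lp ℂ 2 μ} (hG : G ∈ Hsub H) :
    ∃ g : X → ℂ, (⇑G =ᵐ[μ] g) ∧ ∀ z, g z = ⟪Kfun H z, G⟫_ℂ := by
  obtain ⟨f, hf, rfl⟩ := hG
  exact ⟨f, MeasureTheory.MemLp.coeFn_toLp _, fun z => reproducing_inner H hf z⟩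

/-- Almost-everywhere identification of elements of the closure with their
"reproduced" version. -/
lemma coeFn_ae_inner {F : MeasureTheory.Lp ℂ 2 μ} (hF : F ∈ Hcl H) :
    ∀ᵐ z ∂μ, F z = ⟪Kfun H z, F⟫_ℂ := by
  have hFc : F ∈ closure ((Hsub H : Set (MeasureTheory.Lp ℂ 2 μ))) := by
    rw [← Submodule.topologicalClosure_coe]; exact hF
  obtain ⟨u, hu_mem, hu_lim⟩ := mem_closure_iff_seq_limit.mp hFc
  -- convergence in measure, hence a.e. along a subsequence
  have hmeas : MeasureTheory.TendstoInMeasure μ (fun n => ⇑(u n)) Filter.atTop ⇑F := by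
    apply MeasureTheory.tendstoInMeasure_of_tendsto_eLpNorm_of_ne_top (p := 2) two_ne_zero
      ENNReal.ofNat_ne_top
      (fun n => MeasureTheory.Lp.aestronglyMeasurable _)
      (MeasureTheory.Lp.aestronglyMeasurable _)
    have : ∀ n, MeasureTheory.eLpNorm (⇑(u n) - ⇑F) 2 μ
        = ENNReal.ofReal ‖u n - F‖ := by
      intro n
      rw [← MeasureTheory.eLpNorm_congr_ae (MeasureTheory.Lp.coeFn_sub (u n) F),
        MeasureTheory.Lp.norm_def, ENNReal.ofReal_toReal (MeasureTheory.Lp.eLpNorm_lt_top _).ne]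
    simp_rw [this]
    have h6 : Filter.Tendsto (fun n => ‖u n - F‖) Filter.atTop (𝓝 0) := by
      simpa using (hu_lim.sub (tendsto_const_nhds : Filter.Tendsto _ _ (𝓝 F))).norm
    simpa using ENNReal.tendsto_ofReal h6
  obtain ⟨ns, _hns, hae⟩ := hmeas.exists_seq_tendsto_ae
  have hptw : ∀ n, ∃ g : X → ℂ, (⇑(u n) =ᵐ[μ] g) ∧ ∀ z, g z = ⟪Kfun H z, u n⟫_ℂ :=
    fun n => Hsub_pointwise H (hu_mem n)
  choose g hg1 hg2 using hptw
  have hall : ∀ᵐ z ∂μ, ∀ n, (u n) z = g n z := MeasureTheory.ae_all_iff.mpr hg1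
  filter_upwards [hall, hae] with z h1 h2
  have h3 : Filter.Tendsto (fun m => ⟪Kfun H z, u (ns m)⟫_ℂ) Filter.atTop
      (𝓝 ⟪Kfun H z, F⟫_ℂ) :=
    Filter.Tendsto.inner tendsto_const_nhds (hu_lim.comp _hns.tendsto_atTop)
  have h4 : Filter.Tendsto (fun m => (u (ns m)) z) Filter.atTop (𝓝 (F z)) := h2
  have h5 : (fun m => (u (ns m)) z) = fun m => ⟪Kfun H z, u (ns m)⟫_ℂ := by
    funext m; rw [h1 (ns m), hg2 (ns m) z]
  rw [h5] at h4
  exact tendsto_nhds_unique h4 h3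

end SDDFAux
end Setup
section Frame
set_option linter.unusedSectionVars false
set_option maxHeartbeats 1000000

open scoped InnerProductSpace ComplexConjugate
open SDDFAux

namespace SDDFAux

variable {X : Type*} [MeasurableSpace X] [MetricSpace X] {μ : Measure X}
variable (H : L2RKHS X μ) [Nonempty X] {Λ : Set X}

lemma carrier_lintegral_eq {f : X → ℂ} (hf : f ∈ H.carrier) :
    ∫⁻ y, (‖f y‖₊ : ℝ≥0∞) ^ 2 ∂μ = ENNReal.ofReal (‖(H.memL2 f hf).toLp f‖ ^ 2) := by
  rw [← lintegral_nnnorm_sq]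
  apply MeasureTheory.lintegral_congr_ae
  filter_upwards [MeasureTheory.MemLp.coeFn_toLp (H.memL2 f hf)] with y hy
  rw [hy]

lemma ofReal_norm_sq (a : ℂ) : (‖a‖₊ : ℝ≥0∞) ^ 2 = ENNReal.ofReal (‖a‖ ^ 2) := by
  rw [ENNReal.ofReal_pow (norm_nonneg a), ofReal_norm_eq_enorm, enorm_eq_nnnorm]

/-- Finite ℓ² triangle inequality. -/
lemma finset_l2_triangle {ι : Type*} (t : Finset ι) (a b : ι → ℂ) :
    Real.sqrt (∑ i ∈ t, ‖a i + b i‖ ^ 2) ≤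
      Real.sqrt (∑ i ∈ t, ‖a i‖ ^ 2) + Real.sqrt (∑ i ∈ t, ‖b i‖ ^ 2) := by
  classical
  let va : EuclideanSpace ℂ t := WithLp.toLp 2 (fun i => a i)
  let vb : EuclideanSpace ℂ t := WithLp.toLp 2 (fun i => b i)
  have hna : ‖va‖ = Real.sqrt (∑ i ∈ t, ‖a i‖ ^ 2) := by
    rw [EuclideanSpace.norm_eq]
    congr 1
    exact t.sum_coe_sort fun i => ‖a i‖ ^ 2
  have hnb : ‖vb‖ = Real.sqrt (∑ i ∈ t, ‖b i‖ ^ 2) := by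
    rw [EuclideanSpace.norm_eq]
    congr 1
    exact t.sum_coe_sort fun i => ‖b i‖ ^ 2
  have hnab : ‖va + vb‖ = Real.sqrt (∑ i ∈ t, ‖a i + b i‖ ^ 2) := by
    rw [EuclideanSpace.norm_eq]
    congr 1
    exact t.sum_coe_sort fun i => ‖a i + b i‖ ^ 2
  calc Real.sqrt (∑ i ∈ t, ‖a i + b i‖ ^ 2) = ‖va + vb‖ := hnab.symm
    _ ≤ ‖va‖ + ‖vb‖ := norm_add_le _ _
    _ = _ := by rw [hna, hnb]

lemma bessel_finset {B : ℝ} (hB : 0 < B)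
    (hup : ∀ f ∈ H.carrier, ∑' lam : Λ, (‖f lam‖₊ : ℝ≥0∞) ^ 2 ≤
      ENNReal.ofReal B * ∫⁻ y, (‖f y‖₊ : ℝ≥0∞) ^ 2 ∂μ)
    {F : MeasureTheory.Lp ℂ 2 μ} (hF : F ∈ Hcl H) (t : Finset Λ) :
    ∑ lam ∈ t, ‖⟪Kfun H ↑lam, F⟫_ℂ‖ ^ 2 ≤ B * ‖F‖ ^ 2 := by
  have hsub : ∀ G ∈ Hsub H, ∑ lam ∈ t, ‖⟪Kfun H ↑lam, G⟫_ℂ‖ ^ 2 ≤ B * ‖G‖ ^ 2 := by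
    rintro G ⟨f, hf, rfl⟩
    have h1 : ∀ lam : Λ, ‖⟪Kfun H ↑lam, (H.memL2 f hf).toLp f⟫_ℂ‖ = ‖f ↑lam‖ := by
      intro lam; rw [← reproducing_inner H hf]
    have h2 : ENNReal.ofReal (∑ lam ∈ t, ‖f ↑lam‖ ^ 2)
        ≤ ENNReal.ofReal (B * ‖(H.memL2 f hf).toLp f‖ ^ 2) := by
      rw [ENNReal.ofReal_sum_of_nonneg (fun lam _ => sq_nonneg _)]
      calc ∑ lam ∈ t, ENNReal.ofReal (‖f ↑lam‖ ^ 2)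
          = ∑ lam ∈ t, (‖f ↑lam‖₊ : ℝ≥0∞) ^ 2 := by
            refine Finset.sum_congr rfl fun lam _ => (ofReal_norm_sq _).symm
        _ ≤ ∑' lam : Λ, (‖f lam‖₊ : ℝ≥0∞) ^ 2 := ENNReal.sum_le_tsum t
        _ ≤ ENNReal.ofReal B * ∫⁻ y, (‖f y‖₊ : ℝ≥0∞) ^ 2 ∂μ := hup f hf
        _ = ENNReal.ofReal (B * ‖(H.memL2 f hf).toLp f‖ ^ 2) := by
            rw [carrier_lintegral_eq H hf, ← ENNReal.ofReal_mul hB.le]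
    have h3 := (ENNReal.ofReal_le_ofReal_iff
      (mul_nonneg hB.le (sq_nonneg _))).mp h2
    simpa [h1] using h3
  have hclosed : IsClosed {G : MeasureTheory.Lp ℂ 2 μ |
      ∑ lam ∈ t, ‖⟪Kfun H ↑lam, G⟫_ℂ‖ ^ 2 ≤ B * ‖G‖ ^ 2} := by
    apply isClosed_le
    · exact continuous_finset_sum _ fun lam _ =>
        ((Continuous.inner continuous_const continuous_id).norm.pow 2)
    · exact continuous_const.mul (continuous_norm.pow 2)
  exact closure_minimal hsub hclosed (by rw [← Submodule.topologicalClosure_coe]; exact hF)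

lemma bessel_summable {B : ℝ} (hB : 0 < B)
    (hup : ∀ f ∈ H.carrier, ∑' lam : Λ, (‖f lam‖₊ : ℝ≥0∞) ^ 2 ≤
      ENNReal.ofReal B * ∫⁻ y, (‖f y‖₊ : ℝ≥0∞) ^ 2 ∂μ)
    {F : MeasureTheory.Lp ℂ 2 μ} (hF : F ∈ Hcl H) :
    Summable (fun lam : Λ => ‖⟪Kfun H ↑lam, F⟫_ℂ‖ ^ 2) :=
  summable_of_sum_le (fun _ => sq_nonneg _) (fun t => bessel_finset H hB hup hF t)

lemma bessel_tsum_le {B : ℝ} (hB : 0 < B)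
    (hup : ∀ f ∈ H.carrier, ∑' lam : Λ, (‖f lam‖₊ : ℝ≥0∞) ^ 2 ≤
      ENNReal.ofReal B * ∫⁻ y, (‖f y‖₊ : ℝ≥0∞) ^ 2 ∂μ)
    {F : MeasureTheory.Lp ℂ 2 μ} (hF : F ∈ Hcl H) :
    ∑' lam : Λ, ‖⟪Kfun H ↑lam, F⟫_ℂ‖ ^ 2 ≤ B * ‖F‖ ^ 2 :=
  Summable.tsum_le_of_sum_le (bessel_summable H hB hup hF) (fun t => bessel_finset H hB hup hF t)

lemma samp_tsum_ge {A B : ℝ} (hA : 0 < A) (hB : 0 < B)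
    (hlow : ∀ f ∈ H.carrier, ENNReal.ofReal A * (∫⁻ y, (‖f y‖₊ : ℝ≥0∞) ^ 2 ∂μ) ≤
      ∑' lam : Λ, (‖f lam‖₊ : ℝ≥0∞) ^ 2)
    (hup : ∀ f ∈ H.carrier, ∑' lam : Λ, (‖f lam‖₊ : ℝ≥0∞) ^ 2 ≤
      ENNReal.ofReal B * ∫⁻ y, (‖f y‖₊ : ℝ≥0∞) ^ 2 ∂μ)
    {F : MeasureTheory.Lp ℂ 2 μ} (hF : F ∈ Hcl H) :
    A * ‖F‖ ^ 2 ≤ ∑' lam : Λ, ‖⟪Kfun H ↑lam, F⟫_ℂ‖ ^ 2 := by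
  set SF := ∑' lam : Λ, ‖⟪Kfun H ↑lam, F⟫_ℂ‖ ^ 2 with hSF
  have hSFnn : 0 ≤ SF := tsum_nonneg fun _ => sq_nonneg _
  -- main estimate for every positive η
  have key : ∀ η : ℝ, 0 < η → Real.sqrt A * ‖F‖ ≤ Real.sqrt SF +
      (Real.sqrt B + Real.sqrt A) * η := by
    intro η hη
    have hFc : F ∈ closure ((Hsub H : Set (MeasureTheory.Lp ℂ 2 μ))) := by
      rw [← Submodule.topologicalClosure_coe]; exact hF
    obtain ⟨G, hGmem, hGd⟩ := Metric.mem_closure_iff.mp hFc η hη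
    have hFG : ‖F - G‖ < η := by rwa [dist_eq_norm] at hGd
    have hGcl : G ∈ Hcl H := Submodule.le_topologicalClosure _ hGmem
    have hsumG := bessel_summable H hB hup hGcl
    -- lower bound on `G`
    have hlowG : A * ‖G‖ ^ 2 ≤ ∑' lam : Λ, ‖⟪Kfun H ↑lam, G⟫_ℂ‖ ^ 2 := by
      obtain ⟨f, hf, rfl⟩ := hGmem
      have h1 : ∀ lam : Λ, ‖⟪Kfun H ↑lam, (H.memL2 f hf).toLp f⟫_ℂ‖ = ‖f ↑lam‖ := by
        intro lam; rw [← reproducing_inner H hf]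
      have hsum' : Summable (fun lam : Λ => ‖f ↑lam‖ ^ 2) := by
        have := bessel_summable H hB hup (F := (H.memL2 f hf).toLp f)
          (Submodule.le_topologicalClosure _ ⟨f, hf, rfl⟩)
        simpa [h1] using this
      have h2 : ENNReal.ofReal (A * ‖(H.memL2 f hf).toLp f‖ ^ 2)
          ≤ ENNReal.ofReal (∑' lam : Λ, ‖f ↑lam‖ ^ 2) := by
        rw [ENNReal.ofReal_mul hA.le, ← carrier_lintegral_eq H hf,
          ENNReal.ofReal_tsum_of_nonneg (fun _ => sq_nonneg _) hsum']
        calc ENNReal.ofReal A * ∫⁻ y, (‖f y‖₊ : ℝ≥0∞) ^ 2 ∂μ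
            ≤ ∑' lam : Λ, (‖f lam‖₊ : ℝ≥0∞) ^ 2 := hlow f hf
          _ = ∑' lam : Λ, ENNReal.ofReal (‖f ↑lam‖ ^ 2) := by
              exact tsum_congr fun lam => ofReal_norm_sq _
      have h3 := (ENNReal.ofReal_le_ofReal_iff
        (tsum_nonneg fun _ => sq_nonneg _)).mp h2
      calc A * ‖(H.memL2 f hf).toLp f‖ ^ 2 ≤ ∑' lam : Λ, ‖f ↑lam‖ ^ 2 := h3
        _ = _ := by exact tsum_congr fun lam => by rw [h1 lam]
    -- upper bound on `SG` in terms of `SF`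
    have hFGcl : F - G ∈ Hcl H := Submodule.sub_mem _ hF hGcl
    have hSG_le : ∑' lam : Λ, ‖⟪Kfun H ↑lam, G⟫_ℂ‖ ^ 2 ≤
        (Real.sqrt SF + Real.sqrt B * η) ^ 2 := by
      apply Summable.tsum_le_of_sum_le hsumG
      intro t
      have e1 : ∀ lam : Λ, ⟪Kfun H ↑lam, G⟫_ℂ =
          ⟪Kfun H ↑lam, F⟫_ℂ + ⟪Kfun H ↑lam, G - F⟫_ℂ := by
        intro lam
        rw [← inner_add_right]
        congr 1
        abel
      have h4 : Real.sqrt (∑ lam ∈ t, ‖⟪Kfun H ↑lam, G⟫_ℂ‖ ^ 2) ≤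
          Real.sqrt SF + Real.sqrt B * η := by
        calc Real.sqrt (∑ lam ∈ t, ‖⟪Kfun H ↑lam, G⟫_ℂ‖ ^ 2)
            = Real.sqrt (∑ lam ∈ t, ‖⟪Kfun H ↑lam, F⟫_ℂ + ⟪Kfun H ↑lam, G - F⟫_ℂ‖ ^ 2) := by
              congr 1; exact Finset.sum_congr rfl fun lam _ => by rw [e1 lam]
          _ ≤ Real.sqrt (∑ lam ∈ t, ‖⟪Kfun H ↑lam, F⟫_ℂ‖ ^ 2) +
              Real.sqrt (∑ lam ∈ t, ‖⟪Kfun H ↑lam, G - F⟫_ℂ‖ ^ 2) :=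
            finset_l2_triangle t _ _
          _ ≤ Real.sqrt SF + Real.sqrt B * η := by
              have ha : Real.sqrt (∑ lam ∈ t, ‖⟪Kfun H ↑lam, F⟫_ℂ‖ ^ 2) ≤ Real.sqrt SF :=
                Real.sqrt_le_sqrt (Summable.sum_le_tsum t (fun _ _ => sq_nonneg _)
                  (bessel_summable H hB hup hF))
              have h6 : ∑ lam ∈ t, ‖⟪Kfun H ↑lam, G - F⟫_ℂ‖ ^ 2 ≤ B * ‖G - F‖ ^ 2 :=
                bessel_finset H hB hup (Submodule.sub_mem _ hGcl hF) t
              have h7 : Real.sqrt (∑ lam ∈ t, ‖⟪Kfun H ↑lam, G - F⟫_ℂ‖ ^ 2)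
                  ≤ Real.sqrt (B * ‖G - F‖ ^ 2) := Real.sqrt_le_sqrt h6
              have h8 : Real.sqrt (B * ‖G - F‖ ^ 2) = Real.sqrt B * ‖G - F‖ := by
                rw [Real.sqrt_mul hB.le, Real.sqrt_sq (norm_nonneg _)]
              have h9 : ‖G - F‖ ≤ η := by rw [norm_sub_rev]; exact hFG.le
              have hb : Real.sqrt (∑ lam ∈ t, ‖⟪Kfun H ↑lam, G - F⟫_ℂ‖ ^ 2)
                  ≤ Real.sqrt B * η := by
                refine le_trans h7 ?_
                rw [h8]
                exact mul_le_mul_of_nonneg_left h9 (Real.sqrt_nonneg _)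
              exact add_le_add ha hb
      have h5 : 0 ≤ Real.sqrt SF + Real.sqrt B * η := by positivity
      calc ∑ lam ∈ t, ‖⟪Kfun H ↑lam, G⟫_ℂ‖ ^ 2
          = Real.sqrt (∑ lam ∈ t, ‖⟪Kfun H ↑lam, G⟫_ℂ‖ ^ 2) ^ 2 := by
            rw [Real.sq_sqrt (Finset.sum_nonneg fun _ _ => sq_nonneg _)]
        _ ≤ (Real.sqrt SF + Real.sqrt B * η) ^ 2 := by
            exact pow_le_pow_left₀ (Real.sqrt_nonneg _) h4 2
    -- combine
    have h10 : Real.sqrt A * ‖G‖ ≤ Real.sqrt SF + Real.sqrt B * η := by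
      have h11 : A * ‖G‖ ^ 2 ≤ (Real.sqrt SF + Real.sqrt B * η) ^ 2 :=
        le_trans hlowG hSG_le
      have h12 : Real.sqrt (A * ‖G‖ ^ 2) ≤
          Real.sqrt ((Real.sqrt SF + Real.sqrt B * η) ^ 2) := Real.sqrt_le_sqrt h11
      rwa [Real.sqrt_mul hA.le, Real.sqrt_sq (norm_nonneg _),
        Real.sqrt_sq (by positivity)] at h12
    have h13 : ‖F‖ ≤ ‖G‖ + η := by
      have h14 : ‖F‖ - ‖G‖ ≤ ‖F - G‖ := norm_sub_norm_le F G
      linarith [hFG.le]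
    calc Real.sqrt A * ‖F‖ ≤ Real.sqrt A * (‖G‖ + η) :=
          mul_le_mul_of_nonneg_left h13 (Real.sqrt_nonneg _)
      _ = Real.sqrt A * ‖G‖ + Real.sqrt A * η := by ring
      _ ≤ (Real.sqrt SF + Real.sqrt B * η) + Real.sqrt A * η := by linarith
      _ = Real.sqrt SF + (Real.sqrt B + Real.sqrt A) * η := by ring
  have hkey2 : Real.sqrt A * ‖F‖ ≤ Real.sqrt SF := by
    refine le_of_forall_pos_le_add fun ε hε => ?_
    have hc : 0 < Real.sqrt B + Real.sqrt A := by positivity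
    have h15 := key (ε / (Real.sqrt B + Real.sqrt A)) (by positivity)
    have h16 : (Real.sqrt B + Real.sqrt A) * (ε / (Real.sqrt B + Real.sqrt A)) = ε :=
      mul_div_cancel₀ ε hc.ne'
    linarith
  have hAs : Real.sqrt A * Real.sqrt A = A := Real.mul_self_sqrt hA.le
  have h17 := mul_self_le_mul_self (by positivity) hkey2
  calc A * ‖F‖ ^ 2 = (Real.sqrt A * Real.sqrt A) * (‖F‖ * ‖F‖) := by rw [hAs, pow_two]
    _ = (Real.sqrt A * ‖F‖) * (Real.sqrt A * ‖F‖) := by ring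
    _ ≤ Real.sqrt SF * Real.sqrt SF := h17
    _ = SF := Real.mul_self_sqrt hSFnn

end SDDFAux
end Frame
section FrameOp
set_option linter.unusedSectionVars false
set_option maxHeartbeats 1000000

open scoped InnerProductSpace ComplexConjugate
open SDDFAux

namespace SDDFAux

variable {X : Type*} [MeasurableSpace X] [MetricSpace X] {μ : Measure X}
variable (H : L2RKHS X μ) [Nonempty X] (Λ : Set X)

/-- The kernel functions at the sampling points, as elements of the closed subspace. -/
def kap (lam : Λ) : Hcl H := ⟨Kfun H ↑lam, Kfun_mem_Hcl H ↑lam⟩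

variable {Λ}

lemma inner_kap (lam : Λ) (F : Hcl H) :
    ⟪kap H Λ lam, F⟫_ℂ = ⟪Kfun H ↑lam, (F : MeasureTheory.Lp ℂ 2 μ)⟫_ℂ := rfl

/-- Finite Cauchy-Schwarz. -/
lemma finset_cauchy_schwarz {ι : Type*} (t : Finset ι) (c d : ι → ℝ)
    (hc : ∀ i, 0 ≤ c i) (hd : ∀ i, 0 ≤ d i) :
    ∑ i ∈ t, c i * d i ≤
      Real.sqrt (∑ i ∈ t, c i ^ 2) * Real.sqrt (∑ i ∈ t, d i ^ 2) := by
  have h1 := Finset.sum_mul_sq_le_sq_mul_sq t c d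
  have h2 : 0 ≤ ∑ i ∈ t, c i * d i :=
    Finset.sum_nonneg fun i _ => mul_nonneg (hc i) (hd i)
  calc ∑ i ∈ t, c i * d i = Real.sqrt ((∑ i ∈ t, c i * d i) ^ 2) :=
        (Real.sqrt_sq h2).symm
    _ ≤ Real.sqrt ((∑ i ∈ t, c i ^ 2) * ∑ i ∈ t, d i ^ 2) := Real.sqrt_le_sqrt h1
    _ = _ := Real.sqrt_mul (Finset.sum_nonneg fun i _ => sq_nonneg _) _

section WithBounds

variable {A B : ℝ} (hA : 0 < A) (hB : 0 < B)
variable (hlow : ∀ f ∈ H.carrier, ENNReal.ofReal A * (∫⁻ y, (‖f y‖₊ : ℝ≥0∞) ^ 2 ∂μ) ≤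
      ∑' lam : Λ, (‖f lam‖₊ : ℝ≥0∞) ^ 2)
variable (hup : ∀ f ∈ H.carrier, ∑' lam : Λ, (‖f lam‖₊ : ℝ≥0∞) ^ 2 ≤
      ENNReal.ofReal B * ∫⁻ y, (‖f y‖₊ : ℝ≥0∞) ^ 2 ∂μ)

include hB hup

lemma coeff_summable (F : Hcl H) :
    Summable (fun lam : Λ => ‖⟪kap H Λ lam, F⟫_ℂ‖ ^ 2) := by
  simpa [inner_kap, kap] using bessel_summable H hB hup F.2

lemma coeff_tsum_le (F : Hcl H) :
    ∑' lam : Λ, ‖⟪kap H Λ lam, F⟫_ℂ‖ ^ 2 ≤ B * ‖F‖ ^ 2 := by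
  have := bessel_tsum_le H hB hup F.2
  simpa [inner_kap, kap] using this

lemma syn_finset_bound (t : Finset Λ) (c : Λ → ℂ) :
    ‖∑ lam ∈ t, c lam • kap H Λ lam‖ ≤
      Real.sqrt B * Real.sqrt (∑ lam ∈ t, ‖c lam‖ ^ 2) := by
  set G := ∑ lam ∈ t, c lam • kap H Λ lam with hGdef
  rcases eq_or_ne ‖G‖ 0 with hG0 | hG0
  · rw [hG0]; positivity
  have hpos : 0 < ‖G‖ := lt_of_le_of_ne (norm_nonneg _) (Ne.symm hG0)
  have hinner : ⟪G, G⟫_ℂ = ∑ lam ∈ t, c lam * ⟪G, kap H Λ lam⟫_ℂ := by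
    rw [hGdef, inner_sum]
    exact Finset.sum_congr rfl fun lam _ => inner_smul_right (E := Hcl H) _ _ _
  have hnormsq : (‖G‖ : ℝ) ^ 2 ≤ ∑ lam ∈ t, ‖c lam‖ * ‖⟪G, kap H Λ lam⟫_ℂ‖ := by
    have h1 : (‖G‖ : ℝ) ^ 2 = ‖⟪G, G⟫_ℂ‖ := by
      rw [inner_self_eq_norm_sq_to_K (𝕜 := ℂ) G, norm_pow]
      simp
    rw [h1, hinner]
    refine le_trans (norm_sum_le _ _) (le_of_eq ?_)
    exact Finset.sum_congr rfl fun lam _ => norm_mul _ _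
  have hbes : ∑ lam ∈ t, ‖⟪G, kap H Λ lam⟫_ℂ‖ ^ 2 ≤ B * ‖G‖ ^ 2 := by
    have h2 : ∀ lam : Λ, ‖⟪G, kap H Λ lam⟫_ℂ‖ = ‖⟪kap H Λ lam, G⟫_ℂ‖ :=
      fun lam => norm_inner_symm _ _
    have h3 := bessel_finset H hB hup (F := (G : MeasureTheory.Lp ℂ 2 μ)) G.2 t
    simp only [inner_kap] at h2
    calc ∑ lam ∈ t, ‖⟪G, kap H Λ lam⟫_ℂ‖ ^ 2
        = ∑ lam ∈ t, ‖⟪Kfun H ↑lam, (G : MeasureTheory.Lp ℂ 2 μ)⟫_ℂ‖ ^ 2 :=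
          Finset.sum_congr rfl fun lam _ => by rw [h2 lam]
      _ ≤ B * ‖(G : MeasureTheory.Lp ℂ 2 μ)‖ ^ 2 := h3
      _ = B * ‖G‖ ^ 2 := rfl
  have hCS := finset_cauchy_schwarz t (fun lam => ‖c lam‖)
    (fun lam => ‖⟪G, kap H Λ lam⟫_ℂ‖) (fun _ => norm_nonneg _) (fun _ => norm_nonneg _)
  have hmain : ‖G‖ * ‖G‖ ≤ (Real.sqrt B * Real.sqrt (∑ lam ∈ t, ‖c lam‖ ^ 2)) * ‖G‖ := by
    calc ‖G‖ * ‖G‖ = ‖G‖ ^ 2 := (pow_two _).symm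
      _ ≤ ∑ lam ∈ t, ‖c lam‖ * ‖⟪G, kap H Λ lam⟫_ℂ‖ := hnormsq
      _ ≤ Real.sqrt (∑ lam ∈ t, ‖c lam‖ ^ 2) *
          Real.sqrt (∑ lam ∈ t, ‖⟪G, kap H Λ lam⟫_ℂ‖ ^ 2) := hCS
      _ ≤ Real.sqrt (∑ lam ∈ t, ‖c lam‖ ^ 2) * Real.sqrt (B * ‖G‖ ^ 2) := by
          gcongr
      _ = (Real.sqrt B * Real.sqrt (∑ lam ∈ t, ‖c lam‖ ^ 2)) * ‖G‖ := by
          rw [Real.sqrt_mul hB.le, Real.sqrt_sq (norm_nonneg _)]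
          ring
  exact le_of_mul_le_mul_right hmain hpos

lemma syn_summable {c : Λ → ℂ} (hc : Summable fun lam => ‖c lam‖ ^ 2) :
    Summable fun lam : Λ => c lam • kap H Λ lam := by
  rw [summable_iff_vanishing_norm]
  intro ε hε
  obtain ⟨s, hs⟩ := summable_iff_vanishing_norm.mp hc (ε ^ 2 / (B + 1)) (by positivity)
  refine ⟨s, fun t ht => ?_⟩
  have h2 : ∑ lam ∈ t, ‖c lam‖ ^ 2 < ε ^ 2 / (B + 1) := by
    have := hs t ht
    rwa [Real.norm_eq_abs, abs_of_nonneg (Finset.sum_nonneg fun _ _ => sq_nonneg _)] at this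
  calc ‖∑ lam ∈ t, c lam • kap H Λ lam‖
      ≤ Real.sqrt B * Real.sqrt (∑ lam ∈ t, ‖c lam‖ ^ 2) := syn_finset_bound H hB hup t c
    _ ≤ Real.sqrt B * Real.sqrt (ε ^ 2 / (B + 1)) :=
        mul_le_mul_of_nonneg_left (Real.sqrt_le_sqrt h2.le) (Real.sqrt_nonneg _)
    _ = Real.sqrt (B * (ε ^ 2 / (B + 1))) := (Real.sqrt_mul hB.le _).symm
    _ < Real.sqrt (ε ^ 2) := by
        apply Real.sqrt_lt_sqrt (by positivity)
        have hq : B / (B + 1) < 1 := by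
          rw [div_lt_one (by positivity)]; linarith
        calc B * (ε ^ 2 / (B + 1)) = (B / (B + 1)) * ε ^ 2 := by ring
          _ < 1 * ε ^ 2 := mul_lt_mul_of_pos_right hq (by positivity)
          _ = ε ^ 2 := one_mul _
    _ = ε := Real.sqrt_sq hε.le

lemma syn_tsum_bound {c : Λ → ℂ} (hc : Summable fun lam => ‖c lam‖ ^ 2) :
    ‖∑' lam : Λ, c lam • kap H Λ lam‖ ≤
      Real.sqrt B * Real.sqrt (∑' lam : Λ, ‖c lam‖ ^ 2) := by
  have hs := (syn_summable H hB hup hc).hasSum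
  have ht : Filter.Tendsto (fun t : Finset Λ => ∑ lam ∈ t, c lam • kap H Λ lam)
      Filter.atTop (𝓝 (∑' lam : Λ, c lam • kap H Λ lam)) := hs
  refine le_of_tendsto ht.norm (Filter.Eventually.of_forall fun t => ?_)
  calc ‖∑ lam ∈ t, c lam • kap H Λ lam‖
      ≤ Real.sqrt B * Real.sqrt (∑ lam ∈ t, ‖c lam‖ ^ 2) := syn_finset_bound H hB hup t c
    _ ≤ Real.sqrt B * Real.sqrt (∑' lam : Λ, ‖c lam‖ ^ 2) := by
        gcongr
        exact Summable.sum_le_tsum t (fun _ _ => sq_nonneg _) hc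

/-- The frame operator. -/
def Sop : Hcl H →L[ℂ] Hcl H :=
  LinearMap.mkContinuous
    { toFun := fun F => ∑' lam : Λ, ⟪kap H Λ lam, F⟫_ℂ • kap H Λ lam
      map_add' := by
        intro F G
        have h1 : ∀ lam : Λ, ⟪kap H Λ lam, F + G⟫_ℂ • kap H Λ lam
            = ⟪kap H Λ lam, F⟫_ℂ • kap H Λ lam + ⟪kap H Λ lam, G⟫_ℂ • kap H Λ lam := by
          intro lam; rw [inner_add_right, add_smul]
        show (∑' lam : Λ, ⟪kap H Λ lam, F + G⟫_ℂ • kap H Λ lam)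
            = (∑' lam : Λ, ⟪kap H Λ lam, F⟫_ℂ • kap H Λ lam)
              + (∑' lam : Λ, ⟪kap H Λ lam, G⟫_ℂ • kap H Λ lam)
        rw [tsum_congr h1,
          Summable.tsum_add (syn_summable H hB hup (coeff_summable H hB hup F))
            (syn_summable H hB hup (coeff_summable H hB hup G))]
      map_smul' := by
        intro a F
        have h1 : ∀ lam : Λ, ⟪kap H Λ lam, a • F⟫_ℂ • kap H Λ lam
            = a • (⟪kap H Λ lam, F⟫_ℂ • kap H Λ lam) := by
          intro lam; rw [inner_smul_right (E := Hcl H), mul_smul]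
        show (∑' lam : Λ, ⟪kap H Λ lam, a • F⟫_ℂ • kap H Λ lam)
            = a • (∑' lam : Λ, ⟪kap H Λ lam, F⟫_ℂ • kap H Λ lam)
        rw [tsum_congr h1,
          ((syn_summable H hB hup (coeff_summable H hB hup F)).hasSum.const_smul a).tsum_eq] }
    B
    (by
      intro F
      have h1 := syn_tsum_bound H hB hup (coeff_summable H hB hup F)
      have h2 : Real.sqrt (∑' lam : Λ, ‖⟪kap H Λ lam, F⟫_ℂ‖ ^ 2)
          ≤ Real.sqrt (B * ‖F‖ ^ 2) := Real.sqrt_le_sqrt (coeff_tsum_le H hB hup F)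
      calc ‖∑' lam : Λ, ⟪kap H Λ lam, F⟫_ℂ • kap H Λ lam‖
          ≤ Real.sqrt B * Real.sqrt (∑' lam : Λ, ‖⟪kap H Λ lam, F⟫_ℂ‖ ^ 2) := h1
        _ ≤ Real.sqrt B * Real.sqrt (B * ‖F‖ ^ 2) := by gcongr
        _ = B * ‖F‖ := by
            rw [Real.sqrt_mul hB.le, Real.sqrt_sq (norm_nonneg _), ← mul_assoc,
              Real.mul_self_sqrt hB.le])

lemma Sop_apply (F : Hcl H) :
    Sop H hB hup F = ∑' lam : Λ, ⟪kap H Λ lam, F⟫_ℂ • kap H Λ lam := rfl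

lemma inner_Sop (F : Hcl H) :
    ⟪F, Sop H hB hup F⟫_ℂ = ((∑' lam : Λ, ‖⟪kap H Λ lam, F⟫_ℂ‖ ^ 2 : ℝ) : ℂ) := by
  have hs := (syn_summable H hB hup (coeff_summable H hB hup F)).hasSum
  have h1 := (innerSL ℂ F).hasSum hs
  have h2 : ∀ lam : Λ, (innerSL ℂ F) (⟪kap H Λ lam, F⟫_ℂ • kap H Λ lam)
      = ((‖⟪kap H Λ lam, F⟫_ℂ‖ ^ 2 : ℝ) : ℂ) := by
    intro lam
    simp only [innerSL_apply_apply, inner_smul_right (E := Hcl H)]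
    have he : ⟪F, kap H Λ lam⟫_ℂ = (starRingEnd ℂ) ⟪kap H Λ lam, F⟫_ℂ :=
      (inner_conj_symm _ _).symm
    rw [he, RCLike.mul_conj]
    norm_cast
  rw [Sop_apply]
  have h3 : HasSum (fun lam : Λ => ((‖⟪kap H Λ lam, F⟫_ℂ‖ ^ 2 : ℝ) : ℂ))
      ⟪F, ∑' lam : Λ, ⟪kap H Λ lam, F⟫_ℂ • kap H Λ lam⟫_ℂ := by
    have := h1
    simp only [h2] at this
    exact this
  have h4 : HasSum (fun lam : Λ => ((‖⟪kap H Λ lam, F⟫_ℂ‖ ^ 2 : ℝ) : ℂ))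
      ((∑' lam : Λ, ‖⟪kap H Λ lam, F⟫_ℂ‖ ^ 2 : ℝ) : ℂ) :=
    ((coeff_summable H hB hup F).hasSum).mapL Complex.ofRealCLM
  exact h3.unique h4

include hA hlow

lemma Sop_lower (F : Hcl H) : A * ‖F‖ ≤ ‖Sop H hB hup F‖ := by
  have h1 : A * ‖F‖ ^ 2 ≤ ∑' lam : Λ, ‖⟪kap H Λ lam, F⟫_ℂ‖ ^ 2 := by
    have := samp_tsum_ge H hA hB hlow hup F.2
    simpa [inner_kap, kap] using this
  have h2 : (∑' lam : Λ, ‖⟪kap H Λ lam, F⟫_ℂ‖ ^ 2 : ℝ) ≤ ‖F‖ * ‖Sop H hB hup F‖ := by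
    calc (∑' lam : Λ, ‖⟪kap H Λ lam, F⟫_ℂ‖ ^ 2 : ℝ)
        = Complex.re ⟪F, Sop H hB hup F⟫_ℂ := by rw [inner_Sop H hB hup F]; simp
      _ ≤ ‖⟪F, Sop H hB hup F⟫_ℂ‖ := by
          exact Complex.re_le_norm _
      _ ≤ ‖F‖ * ‖Sop H hB hup F‖ := norm_inner_le_norm _ _
  rcases eq_or_ne ‖F‖ 0 with hF0 | hF0
  · rw [hF0, mul_zero]; exact norm_nonneg _
  have hFpos : 0 < ‖F‖ := lt_of_le_of_ne (norm_nonneg _) (Ne.symm hF0)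
  have h3 : (A * ‖F‖) * ‖F‖ ≤ ‖Sop H hB hup F‖ * ‖F‖ := by
    calc (A * ‖F‖) * ‖F‖ = A * ‖F‖ ^ 2 := by ring
      _ ≤ ∑' lam : Λ, ‖⟪kap H Λ lam, F⟫_ℂ‖ ^ 2 := h1
      _ ≤ ‖F‖ * ‖Sop H hB hup F‖ := h2
      _ = ‖Sop H hB hup F‖ * ‖F‖ := by ring
  exact le_of_mul_le_mul_right h3 hFpos

lemma Sop_injective_norm {F G : Hcl H} (h : Sop H hB hup F = Sop H hB hup G) : F = G := by
  have h1 : Sop H hB hup (F - G) = 0 := by rw [map_sub, h, sub_self]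
  have h2 := Sop_lower H hA hB hlow hup (F - G)
  rw [h1, norm_zero] at h2
  have h3 : ‖F - G‖ ≤ 0 := by
    by_contra hc
    push_neg at hc
    nlinarith
  have h4 : F - G = 0 := norm_le_zero_iff.mp h3
  exact sub_eq_zero.mp h4

lemma Sop_surjective : Function.Surjective (Sop H hB hup) := by
  have hanti : AntilipschitzWith (Real.toNNReal A)⁻¹ (Sop H hB hup) := by
    apply ContinuousLinearMap.antilipschitz_of_bound
    intro x
    have h1 := Sop_lower H hA hB hlow hup x
    rw [NNReal.coe_inv, Real.coe_toNNReal A hA.le]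
    calc ‖x‖ = A⁻¹ * (A * ‖x‖) := by field_simp
      _ ≤ A⁻¹ * ‖Sop H hB hup x‖ := by
          have hinv : (0:ℝ) ≤ A⁻¹ := by positivity
          exact mul_le_mul_of_nonneg_left h1 hinv
  have hclosed : IsClosed (Set.range (Sop H hB hup)) :=
    hanti.isClosed_range (Sop H hB hup).uniformContinuous
  set R : Submodule ℂ (Hcl H) := LinearMap.range (Sop H hB hup : Hcl H →ₗ[ℂ] Hcl H) with hRdef
  have hRset : (R : Set (Hcl H)) = Set.range (Sop H hB hup) := by
    rw [hRdef]; exact LinearMap.coe_range _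
  have hRclosed : IsClosed (R : Set (Hcl H)) := by rw [hRset]; exact hclosed
  haveI : CompleteSpace R := hRclosed.completeSpace_coe
  have horth : Rᗮ = ⊥ := by
    rw [Submodule.eq_bot_iff]
    intro g hg
    have hmem : Sop H hB hup g ∈ R := LinearMap.mem_range.mpr ⟨g, rfl⟩
    have h0 : ⟪Sop H hB hup g, g⟫_ℂ = 0 :=
      (Submodule.mem_orthogonal R g).mp hg _ hmem
    have h1 : ⟪g, Sop H hB hup g⟫_ℂ = 0 := by
      rw [← inner_conj_symm, h0, map_zero]
    rw [inner_Sop H hB hup g] at h1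
    have h2 : (∑' lam : Λ, ‖⟪kap H Λ lam, g⟫_ℂ‖ ^ 2 : ℝ) = 0 := by exact_mod_cast h1
    have h4 : A * ‖g‖ ^ 2 ≤ ∑' lam : Λ, ‖⟪kap H Λ lam, g⟫_ℂ‖ ^ 2 := by
      have := samp_tsum_ge H hA hB hlow hup g.2
      simpa [inner_kap, kap] using this
    rw [h2] at h4
    have h5 : ‖g‖ ^ 2 ≤ 0 := by nlinarith
    have h6 : ‖g‖ = 0 := by nlinarith [sq_nonneg ‖g‖, norm_nonneg g]
    exact norm_le_zero_iff.mp h6.le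
  have hRtop : R = ⊤ := Submodule.orthogonal_eq_bot_iff.mp horth
  intro y
  have hy : y ∈ R := by rw [hRtop]; exact Submodule.mem_top
  exact LinearMap.mem_range.mp hy

end WithBounds

end SDDFAux
end FrameOp
section Core
set_option linter.unusedSectionVars false
set_option maxHeartbeats 4000000
set_option synthInstance.maxHeartbeats 1000000

open scoped InnerProductSpace ComplexConjugate
open SDDFAux

namespace SDDFAux

lemma pythagoras_proj {E : Type*} [NormedAddCommGroup E] [InnerProductSpace ℂ E]
    {u p : E} (h : ⟪u - p, p⟫_ℂ = 0) : ‖u‖ ^ 2 = ‖p‖ ^ 2 + ‖u - p‖ ^ 2 := by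
  have h2 : ⟪p, u - p⟫_ℂ = 0 := by
    rw [← inner_conj_symm, h, map_zero]
  have h1 : ‖p + (u - p)‖ ^ 2
      = ‖p‖ ^ 2 + 2 * Complex.re ⟪p, u - p⟫_ℂ + ‖u - p‖ ^ 2 := by
    exact_mod_cast norm_add_sq (𝕜 := ℂ) p (u - p)
  rw [h2] at h1
  simp only [Complex.zero_re, mul_zero, add_zero] at h1
  have h3 : p + (u - p) = u := by abel
  rw [h3] at h1
  linarith

lemma proj_min {E : Type*} [NormedAddCommGroup E] [InnerProductSpace ℂ E]
    {K : Submodule ℂ E} [K.HasOrthogonalProjection] (u : E) {w : E} (hw : w ∈ K) :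
    ‖u - ↑(K.orthogonalProjection u)‖ ≤ ‖u - w‖ := by
  set p : E := ↑(K.orthogonalProjection u) with hpdef
  have hmem : (u - w) - (u - p) = p - w := by abel
  have hperp : ⟪(u - w) - (u - p), (u - p)⟫_ℂ = 0 := by
    rw [hmem]
    have h1 : ⟪u - p, p - w⟫_ℂ = 0 :=
      Submodule.starProjection_inner_eq_zero u (p - w)
        (Submodule.sub_mem _ (Submodule.coe_mem _) hw)
    rw [← inner_conj_symm, h1, map_zero]
  have h2 : ‖u - w‖ ^ 2 = ‖u - p‖ ^ 2 + ‖(u - w) - (u - p)‖ ^ 2 :=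
    pythagoras_proj hperp
  have h3 : ‖u - p‖ ^ 2 ≤ ‖u - w‖ ^ 2 := by nlinarith [sq_nonneg ‖(u - w) - (u - p)‖]
  have h4 := Real.sqrt_le_sqrt h3
  rwa [Real.sqrt_sq (norm_nonneg _), Real.sqrt_sq (norm_nonneg _)] at h4

variable {X : Type*} [MeasurableSpace X] [MetricSpace X] {μ : Measure X}
variable (H : L2RKHS X μ) [Nonempty X] {Λ : Set X}
variable {A B : ℝ} (hA : 0 < A) (hB : 0 < B)
variable (hlow : ∀ f ∈ H.carrier, ENNReal.ofReal A * (∫⁻ y, (‖f y‖₊ : ℝ≥0∞) ^ 2 ∂μ) ≤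
      ∑' lam : Λ, (‖f lam‖₊ : ℝ≥0∞) ^ 2)
variable (hup : ∀ f ∈ H.carrier, ∑' lam : Λ, (‖f lam‖₊ : ℝ≥0∞) ^ 2 ≤
      ENNReal.ofReal B * ∫⁻ y, (‖f y‖₊ : ℝ≥0∞) ^ 2 ∂μ)

include hA hB hlow hup

/-- The key estimate: the trace of the kernel over a ball is bounded by the number
of sampling points in an enlarged ball plus a small error. -/
lemma core_estimate {C₂ : ℝ} (hC₂ : ∀ z : X, (H.k z z).re ≤ C₂)
    {ε s : ℝ} (hε : 0 < ε)
    (hHAPs : ∀ z : X, ∑' lam : ↥(Λ \ ball z s), (‖H.k z ↑lam‖₊ : ℝ≥0∞) ^ 2 <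
      ENNReal.ofReal (ε ^ 2))
    (x : X) (r : ℝ) :
    (∫⁻ z in ball x r, ENNReal.ofReal ((H.k z z).re) ∂μ)
      ≤ Measure.count (Λ ∩ ball x (r + s))
        + ENNReal.ofReal (B * ε ^ 2 / A ^ 2) * μ (ball x r) := by
  classical
  rcases Set.infinite_or_finite (Λ ∩ ball x (r + s)) with hinf | hfin
  · rw [Measure.count_apply_infinite hinf]
    simp
  -- the finite index set
  have hFI : {lam : ↥Λ | (lam : X) ∈ ball x (r + s)} =
      (Subtype.val : ↥Λ → X) ⁻¹' (Λ ∩ ball x (r + s)) := by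
    ext lam; simp only [Set.mem_setOf_eq, Set.mem_preimage, Set.mem_inter_iff]
    exact ⟨fun h => ⟨lam.2, h⟩, fun h => h.2⟩
  have hFIfin : {lam : ↥Λ | (lam : X) ∈ ball x (r + s)}.Finite := by
    rw [hFI]
    exact Set.Finite.preimage (Set.injOn_of_injective Subtype.val_injective) hfin
  set Fset : Finset ↥Λ := hFIfin.toFinset with hFsetdef
  have hFmem : ∀ lam : ↥Λ, lam ∈ Fset ↔ (lam : X) ∈ ball x (r + s) := by
    intro lam; rw [hFsetdef, Set.Finite.mem_toFinset]; exact Iff.rfl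
  -- preimages of the kernel functions under the frame operator
  have hsurj := Sop_surjective H hA hB hlow hup
  set v : ↥Λ → Hcl H := fun lam => Classical.choose (hsurj (kap H Λ lam)) with hvdef
  have hv : ∀ lam : ↥Λ, Sop H hB hup (v lam) = kap H Λ lam :=
    fun lam => Classical.choose_spec (hsurj (kap H Λ lam))
  -- the finite-dimensional comparison space
  set W : Submodule ℂ (Hcl H) := Submodule.span ℂ (↑(Fset.image v) : Set (Hcl H))
    with hWdef
  haveI hWfd : FiniteDimensional ℂ W := FiniteDimensional.span_finset ℂ (Fset.image v)
  set P := W.orthogonalProjection with hPdef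
  set b := stdOrthonormalBasis ℂ W with hbdef
  set m := Module.finrank ℂ W with hmdef
  -- orthogonality facts
  have hperp : ∀ (z : X), ∀ w ∈ W, ⟪ev H z - ↑(P (ev H z)), w⟫_ℂ = 0 :=
    fun z w hw => Submodule.starProjection_inner_eq_zero (ev H z) w hw
  have hpyth : ∀ z : X, ‖ev H z‖ ^ 2
      = ‖(↑(P (ev H z)) : Hcl H)‖ ^ 2 + ‖ev H z - ↑(P (ev H z))‖ ^ 2 := by
    intro z
    have h1 : ⟪ev H z - ↑(P (ev H z)), (↑(P (ev H z)) : Hcl H)⟫_ℂ = 0 :=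
      hperp z _ (Submodule.coe_mem _)
    exact pythagoras_proj h1
  -- Parseval for the projection
  have hpars : ∀ z : X, ‖(↑(P (ev H z)) : Hcl H)‖ ^ 2
      = ∑ j : Fin m, ‖⟪(↑(b j) : Hcl H), ev H z⟫_ℂ‖ ^ 2 := by
    intro z
    set w := P (ev H z) with hwdef
    have h2 : ‖(↑w : Hcl H)‖ = ‖b.repr w‖ := (b.repr.norm_map w).symm
    have h3 : ‖b.repr w‖ ^ 2 = ∑ j : Fin m, ‖b.repr w j‖ ^ 2 := by
      rw [EuclideanSpace.norm_eq,
        Real.sq_sqrt (Finset.sum_nonneg fun _ _ => sq_nonneg _)]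
    have h5 : ∀ j : Fin m, ⟪b j, w⟫_ℂ = ⟪(↑(b j) : Hcl H), ev H z⟫_ℂ := by
      intro j
      rw [Submodule.coe_inner]
      have h6 : ⟪(↑(b j) : Hcl H), ev H z - ↑w⟫_ℂ = 0 := by
        rw [← inner_conj_symm, hperp z _ (Submodule.coe_mem (b j)), map_zero]
      rw [inner_sub_right] at h6
      exact (sub_eq_zero.mp h6).symm
    rw [h2, h3]
    refine Finset.sum_congr rfl fun j _ => ?_
    rw [b.repr_apply_apply w j, h5 j]
  -- error bound on the ball
  have herr : ∀ z : X, z ∈ ball x r →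
      ‖ev H z - ↑(P (ev H z))‖ ^ 2 ≤ B * ε ^ 2 / A ^ 2 := by
    intro z hz
    set cz : ↥Λ → ℂ := fun lam => ⟪kap H Λ lam, ev H z⟫_ℂ with hczdef
    have hczsum : Summable fun lam : ↥Λ => ‖cz lam‖ ^ 2 :=
      coeff_summable H hB hup (ev H z)
    set c' : ↥Λ → ℂ := fun lam => if lam ∈ Fset then 0 else cz lam with hc'def
    have hc'le : ∀ lam : ↥Λ, ‖c' lam‖ ^ 2 ≤ ‖cz lam‖ ^ 2 := by
      intro lam
      by_cases hmem : lam ∈ Fset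
      · simp [hc'def, hmem, sq_nonneg]
      · simp [hc'def, hmem]
    have hc'sum : Summable fun lam : ↥Λ => ‖c' lam‖ ^ 2 :=
      Summable.of_nonneg_of_le (fun _ => sq_nonneg _) hc'le hczsum
    -- tail estimate via HAP
    have htail : ∑' lam : ↥Λ, ‖c' lam‖ ^ 2 ≤ ε ^ 2 := by
      have e1 : ENNReal.ofReal (∑' lam : ↥Λ, ‖c' lam‖ ^ 2)
          = ∑' lam : ↥Λ, ENNReal.ofReal (‖c' lam‖ ^ 2) :=
        ENNReal.ofReal_tsum_of_nonneg (fun _ => sq_nonneg _) hc'sum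
      set S' : Set ↥Λ := {lam : ↥Λ | (lam : X) ∉ ball x (r + s)} with hS'def
      have hsupp : Function.support (fun lam : ↥Λ => ENNReal.ofReal (‖c' lam‖ ^ 2)) ⊆ S' := by
        intro lam hlam
        simp only [Function.mem_support] at hlam
        by_contra hmem
        simp only [hS'def, Set.mem_setOf_eq, not_not] at hmem
        have h0 : c' lam = 0 := by simp [hc'def, (hFmem lam).mpr hmem]
        rw [h0] at hlam
        simp at hlam
      have e2 : ∑' p : ↥S', ENNReal.ofReal (‖c' ↑p‖ ^ 2)
          = ∑' lam : ↥Λ, ENNReal.ofReal (‖c' lam‖ ^ 2) :=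
        tsum_subtype_eq_of_support_subset hsupp
      have hmemq : ∀ p : ↥S', (↑↑p : X) ∈ Λ \ ball z s := by
        intro p
        refine ⟨(↑p : ↥Λ).2, ?_⟩
        intro hball
        apply p.2
        have h1 : dist (↑↑p : X) z < s := mem_ball.mp hball
        have h2 : dist z x < r := mem_ball.mp hz
        have h3 : dist (↑↑p : X) x < r + s := by
          calc dist (↑↑p : X) x ≤ dist (↑↑p : X) z + dist z x := dist_triangle _ _ _
            _ < s + r := by linarith
            _ = r + s := by ring
        exact mem_ball.mpr h3
      have e3 : ∑' p : ↥S', ENNReal.ofReal (‖c' ↑p‖ ^ 2)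
          ≤ ∑' q : ↥(Λ \ ball z s), (‖H.k z ↑q‖₊ : ℝ≥0∞) ^ 2 := by
        refine Summable.tsum_le_tsum_of_inj (fun p : ↥S' => (⟨↑↑p, hmemq p⟩ : ↥(Λ \ ball z s)))
          ?_ (fun c _ => zero_le) ?_ ENNReal.summable ENNReal.summable
        · intro p q hpq
          have h1 : (↑↑p : X) = (↑↑q : X) := by
            have h2 := congrArg (Subtype.val : ↥(Λ \ ball z s) → X) hpq
            simpa using h2
          exact Subtype.ext (Subtype.ext h1)
        · intro p
          have hnotF : (↑p : ↥Λ) ∉ Fset := fun hc => p.2 ((hFmem _).mp hc)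
          have h1 : c' ↑p = cz ↑p := by simp [hc'def, hnotF]
          have h3 : cz ↑p = H.k (↑↑p) z := by
            rw [hczdef]
            show ⟪kap H Λ ↑p, ev H z⟫_ℂ = H.k (↑↑p) z
            rw [inner_kap]
            exact (kernel_inner H z ↑↑p).symm
          have h4 : ‖c' ↑p‖ = ‖H.k z ↑↑p‖ := by
            rw [h1, h3, kernel_conj H z ↑↑p]
            exact (RCLike.norm_conj _).symm
          show ENNReal.ofReal (‖c' ↑p‖ ^ 2) ≤ (‖H.k z ↑↑p‖₊ : ℝ≥0∞) ^ 2
          rw [ofReal_norm_sq]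
          exact le_of_eq (by rw [h4])
      have e5 : ENNReal.ofReal (∑' lam : ↥Λ, ‖c' lam‖ ^ 2) ≤ ENNReal.ofReal (ε ^ 2) := by
        rw [e1, ← e2]
        exact le_trans e3 (hHAPs z).le
      exact (ENNReal.ofReal_le_ofReal_iff (by positivity)).mp e5
    -- the approximating vector
    set uz : Hcl H := ∑ lam ∈ Fset, cz lam • v lam with huzdef
    have huzW : uz ∈ W := by
      rw [huzdef]
      apply Submodule.sum_mem
      intro lam hlam
      refine Submodule.smul_mem _ _ (Submodule.subset_span ?_)
      simp only [Finset.coe_image, Set.mem_image, Finset.mem_coe]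
      exact ⟨lam, hlam, rfl⟩
    have hSdiff : Sop H hB hup (ev H z - uz) = ∑' lam : ↥Λ, c' lam • kap H Λ lam := by
      rw [map_sub]
      have h1 : Sop H hB hup uz = ∑ lam ∈ Fset, cz lam • kap H Λ lam := by
        rw [huzdef, map_sum]
        exact Finset.sum_congr rfl fun lam _ => by rw [_root_.map_smul, hv lam]
      have h2 : Sop H hB hup (ev H z) = ∑' lam : ↥Λ, cz lam • kap H Λ lam :=
        Sop_apply H hB hup (ev H z)
      have h3 : ∀ lam : ↥Λ, cz lam • kap H Λ lam
          = (if lam ∈ Fset then cz lam else 0) • kap H Λ lam + c' lam • kap H Λ lam := by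
        intro lam
        by_cases hmem : lam ∈ Fset
        · simp [hc'def, hmem]
        · simp [hc'def, hmem]
      have h4 : Summable fun lam : ↥Λ =>
          (if lam ∈ Fset then cz lam else 0) • kap H Λ lam :=
        summable_of_ne_finset_zero (s := Fset) (fun lam hlam => by simp [hlam])
      have h5 : Summable fun lam : ↥Λ => c' lam • kap H Λ lam :=
        syn_summable H hB hup hc'sum
      have h6 : ∑' lam : ↥Λ, cz lam • kap H Λ lam
          = (∑' lam : ↥Λ, (if lam ∈ Fset then cz lam else 0) • kap H Λ lam)
            + ∑' lam : ↥Λ, c' lam • kap H Λ lam := by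
        rw [← Summable.tsum_add h4 h5]
        exact tsum_congr h3
      have h7 : (∑' lam : ↥Λ, (if lam ∈ Fset then cz lam else 0) • kap H Λ lam)
          = ∑ lam ∈ Fset, cz lam • kap H Λ lam := by
        rw [tsum_eq_sum (s := Fset) (fun lam hlam => by simp [hlam])]
        exact Finset.sum_congr rfl fun lam hlam => by simp [hlam]
      rw [h2, h1, h6, h7]
      abel
    have hdiff_norm : ‖ev H z - uz‖ ≤ Real.sqrt B * ε / A := by
      have h1 : A * ‖ev H z - uz‖ ≤ ‖Sop H hB hup (ev H z - uz)‖ :=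
        Sop_lower H hA hB hlow hup _
      have h2 : ‖Sop H hB hup (ev H z - uz)‖
          ≤ Real.sqrt B * Real.sqrt (∑' lam : ↥Λ, ‖c' lam‖ ^ 2) := by
        rw [hSdiff]
        exact syn_tsum_bound H hB hup hc'sum
      have h3 : Real.sqrt (∑' lam : ↥Λ, ‖c' lam‖ ^ 2) ≤ ε := by
        have h4 := Real.sqrt_le_sqrt htail
        rwa [Real.sqrt_sq hε.le] at h4
      rw [le_div_iff₀ hA]
      calc ‖ev H z - uz‖ * A = A * ‖ev H z - uz‖ := by ring
        _ ≤ ‖Sop H hB hup (ev H z - uz)‖ := h1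
        _ ≤ Real.sqrt B * Real.sqrt (∑' lam : ↥Λ, ‖c' lam‖ ^ 2) := h2
        _ ≤ Real.sqrt B * ε := mul_le_mul_of_nonneg_left h3 (Real.sqrt_nonneg _)
    have h4 : ‖ev H z - ↑(P (ev H z))‖ ≤ ‖ev H z - uz‖ := proj_min (ev H z) huzW
    calc ‖ev H z - ↑(P (ev H z))‖ ^ 2 ≤ (Real.sqrt B * ε / A) ^ 2 := by
          apply pow_le_pow_left₀ (norm_nonneg _) (le_trans h4 hdiff_norm)
      _ = B * ε ^ 2 / A ^ 2 := by
          rw [div_pow, mul_pow, Real.sq_sqrt hB.le]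
  -- pointwise identity for the integrand
  have hdiag : ∀ z : X, ENNReal.ofReal ((H.k z z).re)
      = (∑ j : Fin m, (‖⟪(↑(b j) : Hcl H), ev H z⟫_ℂ‖₊ : ℝ≥0∞) ^ 2)
        + ENNReal.ofReal (‖ev H z - ↑(P (ev H z))‖ ^ 2) := by
    intro z
    have h1 : (H.k z z).re = ‖ev H z‖ ^ 2 := kernel_diag_re H z
    rw [h1, hpyth z, hpars z,
      ENNReal.ofReal_add (Finset.sum_nonneg fun _ _ => sq_nonneg _) (sq_nonneg _),
      ENNReal.ofReal_sum_of_nonneg (fun _ _ => sq_nonneg _)]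
    congr 1
    exact Finset.sum_congr rfl fun j _ => (ofReal_norm_sq _).symm
  -- measurability data
  have haem : ∀ j : Fin m, AEMeasurable
      (fun z => (‖⟪(↑(b j) : Hcl H), ev H z⟫_ℂ‖₊ : ℝ≥0∞) ^ 2) μ := by
    intro j
    set Gj : MeasureTheory.Lp ℂ 2 μ := ((↑(b j) : Hcl H) : MeasureTheory.Lp ℂ 2 μ)
      with hGjdef
    have hGmem : Gj ∈ Hcl H := Submodule.coe_mem _
    have hae := coeFn_ae_inner H hGmem
    have heq : (fun z => (‖⟪(↑(b j) : Hcl H), ev H z⟫_ℂ‖₊ : ℝ≥0∞) ^ 2)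
        =ᵐ[μ] fun z => (‖Gj z‖₊ : ℝ≥0∞) ^ 2 := by
      filter_upwards [hae] with z hz
      have h1 : ⟪(↑(b j) : Hcl H), ev H z⟫_ℂ = ⟪Gj, Kfun H z⟫_ℂ := by
        rw [Submodule.coe_inner]
        rfl
      rw [h1]
      have h2 : ‖⟪Gj, Kfun H z⟫_ℂ‖₊ = ‖⟪Kfun H z, Gj⟫_ℂ‖₊ := by
        have := norm_inner_symm (𝕜 := ℂ) Gj (Kfun H z)
        exact NNReal.coe_injective (by simpa using this)
      rw [h2, ← hz]
    exact (((MeasureTheory.Lp.aestronglyMeasurable Gj).enorm).pow_const 2).congr heq.symm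
  have haem' : ∀ j : Fin m, AEMeasurable
      (fun z => (‖⟪(↑(b j) : Hcl H), ev H z⟫_ℂ‖₊ : ℝ≥0∞) ^ 2) (μ.restrict (ball x r)) :=
    fun j => (haem j).restrict
  -- the main term
  have hone : ∀ j : Fin m,
      (∫⁻ z in ball x r, (‖⟪(↑(b j) : Hcl H), ev H z⟫_ℂ‖₊ : ℝ≥0∞) ^ 2 ∂μ) ≤ 1 := by
    intro j
    set Gj : MeasureTheory.Lp ℂ 2 μ := ((↑(b j) : Hcl H) : MeasureTheory.Lp ℂ 2 μ)
      with hGjdef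
    have hGmem : Gj ∈ Hcl H := Submodule.coe_mem _
    have hae := coeFn_ae_inner H hGmem
    have heq : (fun z => (‖⟪(↑(b j) : Hcl H), ev H z⟫_ℂ‖₊ : ℝ≥0∞) ^ 2)
        =ᵐ[μ] fun z => (‖Gj z‖₊ : ℝ≥0∞) ^ 2 := by
      filter_upwards [hae] with z hz
      have h1 : ⟪(↑(b j) : Hcl H), ev H z⟫_ℂ = ⟪Gj, Kfun H z⟫_ℂ := by
        rw [Submodule.coe_inner]
        rfl
      rw [h1]
      have h2 : ‖⟪Gj, Kfun H z⟫_ℂ‖₊ = ‖⟪Kfun H z, Gj⟫_ℂ‖₊ := by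
        have := norm_inner_symm (𝕜 := ℂ) Gj (Kfun H z)
        exact NNReal.coe_injective (by simpa using this)
      rw [h2, ← hz]
    have hnorm1 : ‖Gj‖ = 1 := by
      have h1 : ‖b j‖ = 1 := b.orthonormal.1 j
      rw [hGjdef]
      exact h1
    calc (∫⁻ z in ball x r, (‖⟪(↑(b j) : Hcl H), ev H z⟫_ℂ‖₊ : ℝ≥0∞) ^ 2 ∂μ)
        = ∫⁻ z in ball x r, (‖Gj z‖₊ : ℝ≥0∞) ^ 2 ∂μ :=
          MeasureTheory.lintegral_congr_ae
            (heq.filter_mono (MeasureTheory.ae_mono Measure.restrict_le_self))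
      _ ≤ ∫⁻ z, (‖Gj z‖₊ : ℝ≥0∞) ^ 2 ∂μ :=
          MeasureTheory.lintegral_mono' Measure.restrict_le_self le_rfl
      _ = ENNReal.ofReal (‖Gj‖ ^ 2) := lintegral_nnnorm_sq Gj
      _ = 1 := by rw [hnorm1]; simp
  have hcount : (m : ℝ≥0∞) ≤ Measure.count (Λ ∩ ball x (r + s)) := by
    have h1 : m ≤ Fset.card := by
      calc m ≤ (Fset.image v).card := finrank_span_finset_le_card (Fset.image v)
        _ ≤ Fset.card := Finset.card_image_le
    have h2 : ((Fset.image Subtype.val).card : ℝ≥0∞)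
        ≤ Measure.count (Λ ∩ ball x (r + s)) := by
      apply card_le_count
      intro y hy
      simp only [Finset.coe_image, Set.mem_image, Finset.mem_coe] at hy
      obtain ⟨lam, hlam, rfl⟩ := hy
      exact ⟨lam.2, (hFmem lam).mp hlam⟩
    have h3 : (Fset.image Subtype.val).card = Fset.card :=
      Finset.card_image_of_injective Fset Subtype.val_injective
    calc (m : ℝ≥0∞) ≤ (Fset.card : ℝ≥0∞) := by exact_mod_cast h1
      _ = ((Fset.image Subtype.val).card : ℝ≥0∞) := by rw [h3]
      _ ≤ _ := h2
  -- integrate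
  have hmain : (∫⁻ z in ball x r,
      (∑ j : Fin m, (‖⟪(↑(b j) : Hcl H), ev H z⟫_ℂ‖₊ : ℝ≥0∞) ^ 2) ∂μ)
      ≤ Measure.count (Λ ∩ ball x (r + s)) := by
    rw [MeasureTheory.lintegral_finset_sum' Finset.univ (fun j _ => haem' j)]
    calc ∑ j : Fin m, (∫⁻ z in ball x r, (‖⟪(↑(b j) : Hcl H), ev H z⟫_ℂ‖₊ : ℝ≥0∞) ^ 2 ∂μ)
        ≤ ∑ _j : Fin m, (1 : ℝ≥0∞) := Finset.sum_le_sum fun j _ => hone j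
      _ = (m : ℝ≥0∞) := by simp
      _ ≤ _ := hcount
  have herr_int : (∫⁻ z in ball x r,
      ENNReal.ofReal (‖ev H z - ↑(P (ev H z))‖ ^ 2) ∂μ)
      ≤ ENNReal.ofReal (B * ε ^ 2 / A ^ 2) * μ (ball x r) := by
    have hpt : ∀ z : X, ENNReal.ofReal (‖ev H z - ↑(P (ev H z))‖ ^ 2)
        ≤ ENNReal.ofReal (B * ε ^ 2 / A ^ 2)
          + (ball x r)ᶜ.indicator (fun _ => ENNReal.ofReal C₂) z := by
      intro z
      by_cases hz : z ∈ ball x r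
      · rw [Set.indicator_of_notMem (by simpa using hz)]
        rw [add_zero]
        exact ENNReal.ofReal_le_ofReal (herr z hz)
      · rw [Set.indicator_of_mem (by simpa using hz)]
        have h1 : ‖ev H z - ↑(P (ev H z))‖ ^ 2 ≤ C₂ := by
          have h2 := hpyth z
          have h3 := hC₂ z
          have h4 : (H.k z z).re = ‖ev H z‖ ^ 2 := kernel_diag_re H z
          nlinarith [sq_nonneg ‖(↑(P (ev H z)) : Hcl H)‖]
        calc ENNReal.ofReal (‖ev H z - ↑(P (ev H z))‖ ^ 2)
            ≤ ENNReal.ofReal C₂ := ENNReal.ofReal_le_ofReal h1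
          _ ≤ _ := le_add_self
    calc (∫⁻ z in ball x r, ENNReal.ofReal (‖ev H z - ↑(P (ev H z))‖ ^ 2) ∂μ)
        ≤ ∫⁻ z in ball x r, (ENNReal.ofReal (B * ε ^ 2 / A ^ 2)
            + (ball x r)ᶜ.indicator (fun _ => ENNReal.ofReal C₂) z) ∂μ :=
          MeasureTheory.lintegral_mono hpt
      _ = (∫⁻ _z in ball x r, ENNReal.ofReal (B * ε ^ 2 / A ^ 2) ∂μ)
          + ∫⁻ z in ball x r, (ball x r)ᶜ.indicator (fun _ => ENNReal.ofReal C₂) z ∂μ :=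
          MeasureTheory.lintegral_add_left measurable_const _
      _ = ENNReal.ofReal (B * ε ^ 2 / A ^ 2) * μ (ball x r) + 0 := by
          rw [MeasureTheory.setLIntegral_const,
            lintegral_indicator_compl_restrict μ (ball x r) _]
      _ = ENNReal.ofReal (B * ε ^ 2 / A ^ 2) * μ (ball x r) := by rw [add_zero]
  calc (∫⁻ z in ball x r, ENNReal.ofReal ((H.k z z).re) ∂μ)
      = ∫⁻ z in ball x r,
          ((∑ j : Fin m, (‖⟪(↑(b j) : Hcl H), ev H z⟫_ℂ‖₊ : ℝ≥0∞) ^ 2)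
            + ENNReal.ofReal (‖ev H z - ↑(P (ev H z))‖ ^ 2)) ∂μ :=
        MeasureTheory.lintegral_congr hdiag
    _ = (∫⁻ z in ball x r,
          (∑ j : Fin m, (‖⟪(↑(b j) : Hcl H), ev H z⟫_ℂ‖₊ : ℝ≥0∞) ^ 2) ∂μ)
        + ∫⁻ z in ball x r, ENNReal.ofReal (‖ev H z - ↑(P (ev H z))‖ ^ 2) ∂μ :=
        MeasureTheory.lintegral_add_left'
          (Finset.aemeasurable_fun_sum Finset.univ (fun j _ => haem' j)) _
    _ ≤ _ := add_le_add hmain herr_int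

end SDDFAux
end Core
section Main
set_option linter.unusedSectionVars false
set_option maxHeartbeats 4000000
set_option synthInstance.maxHeartbeats 1000000

open scoped InnerProductSpace ComplexConjugate
open SDDFAux

theorem sampling_density_dimension_free' {X : Type*} [MeasurableSpace X] [MetricSpace X]
    (μ : Measure X) (H : L2RKHS X μ)
    (hballs : FiniteBalls μ) (hNDB : NDB μ) (hWAD : WAD μ)
    (hD : H.AxiomD) (hWL : H.WL) (hHAP : H.HAP)
    (Λ : Set X) (hΛ : H.Sampling Λ) :
    1 ≤ liminf (fun r : ℝ => ⨅ x : X,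
      Measure.count (Λ ∩ ball x r) / ∫⁻ y in ball x r, ENNReal.ofReal ((H.k y y).re) ∂μ)
      atTop := by
  classical
  rcases isEmpty_or_nonempty X with hXe | hXne
  · have hconst : ∀ r : ℝ, (⨅ x : X,
        Measure.count (Λ ∩ ball x r) / ∫⁻ y in ball x r, ENNReal.ofReal ((H.k y y).re) ∂μ)
        = (⊤ : ℝ≥0∞) := fun r => iInf_of_empty _
    simp only [hconst]
    rw [Filter.liminf_const]
    exact le_top
  obtain ⟨A, B, hA, hB, hsamp⟩ := hΛ
  have hlow : ∀ f ∈ H.carrier, ENNReal.ofReal A * (∫⁻ y, (‖f y‖₊ : ℝ≥0∞) ^ 2 ∂μ) ≤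
      ∑' lam : Λ, (‖f lam‖₊ : ℝ≥0∞) ^ 2 := fun f hf => (hsamp f hf).1
  have hup : ∀ f ∈ H.carrier, ∑' lam : Λ, (‖f lam‖₊ : ℝ≥0∞) ^ 2 ≤
      ENNReal.ofReal B * ∫⁻ y, (‖f y‖₊ : ℝ≥0∞) ^ 2 ∂μ := fun f hf => (hsamp f hf).2
  obtain ⟨C₁, C₂, hC₁, hC₂pos, hD12⟩ := hD
  have hC₁' : ∀ z, C₁ ≤ (H.k z z).re := fun z => (hD12 z).1
  have hC₂' : ∀ z, (H.k z z).re ≤ C₂ := fun z => (hD12 z).2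
  obtain ⟨r₀, hr₀pos, hr₀⟩ := hNDB
  have hBes : H.Bessel Λ := ⟨B, hB, hup⟩
  -- the main step : for every 0 ≤ t < 1, eventually `ofReal t` is below the quotient
  have key : ∀ t : ℝ, 0 ≤ t → t < 1 → ENNReal.ofReal t ≤ liminf (fun r : ℝ => ⨅ x : X,
      Measure.count (Λ ∩ ball x r) / ∫⁻ y in ball x r, ENNReal.ofReal ((H.k y y).re) ∂μ)
      atTop := by
    intro t ht0 ht1
    set η : ℝ := 1 - t with hηdef
    have hη : 0 < η := by simp [hηdef]; linarith
    -- choose ε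
    set ε : ℝ := Real.sqrt ((C₁ * η / 2) * A ^ 2 / B) with hεdef
    have hεpos : 0 < ε := Real.sqrt_pos.mpr (by positivity)
    have hεsq : B * ε ^ 2 / A ^ 2 = C₁ * η / 2 := by
      rw [hεdef, Real.sq_sqrt (by positivity)]
      field_simp
    obtain ⟨s₀, hs₀⟩ := hHAP Λ hBes ε hεpos
    set s : ℝ := max s₀ 1 with hsdef
    have hs1 : (1 : ℝ) ≤ s := le_max_right _ _
    have hspos : 0 < s := lt_of_lt_of_le one_pos hs1
    have hHAPs : ∀ z : X, ∑' lam : ↥(Λ \ ball z s), (‖H.k z ↑lam‖₊ : ℝ≥0∞) ^ 2 <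
        ENNReal.ofReal (ε ^ 2) := by
      intro z
      refine lt_of_le_of_lt ?_ (hs₀ z)
      have hsub : ∀ q : ↥(Λ \ ball z s), (↑q : X) ∈ Λ \ ball z s₀ := by
        intro q
        refine ⟨q.2.1, fun hc => q.2.2 (ball_subset_ball (le_max_left s₀ 1) hc)⟩
      refine Summable.tsum_le_tsum_of_inj (fun q : ↥(Λ \ ball z s) => (⟨↑q, hsub q⟩ : ↥(Λ \ ball z s₀)))
        ?_ (fun c _ => zero_le) (fun q => le_rfl) ENNReal.summable ENNReal.summable
      intro p q hpq
      have h1 := congrArg (Subtype.val : ↥(Λ \ ball z s₀) → X) hpq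
      simp only [] at h1
      exact Subtype.ext h1
    set mn : ℕ := ⌈s⌉₊ with hmndef
    have hmn1 : 1 ≤ mn := Nat.one_le_ceil_iff.mpr hspos
    have hsmn : s ≤ (mn : ℝ) := Nat.le_ceil s
    have hmns : (mn : ℝ) < s + 1 := Nat.ceil_lt_add_one hspos.le
    -- WAD
    set δ' : ℝ≥0∞ := ENNReal.ofReal (C₁ * η / (2 * C₂ * mn)) with hδ'def
    have hδ'pos : 0 < δ' := by
      rw [hδ'def]
      apply ENNReal.ofReal_pos.mpr
      have : (0:ℝ) < mn := by exact_mod_cast hmn1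
      positivity
    have hWADev : ∀ᶠ ρ in (Filter.atTop : Filter ℝ),
        (⨆ x : X, μ (ball x (ρ + 1) \ ball x ρ) / μ (ball x ρ)) ≤ δ' := by
      have := ENNReal.tendsto_nhds_zero.mp hWAD δ' hδ'pos
      exact this
    obtain ⟨T, hT⟩ := Filter.eventually_atTop.mp hWADev
    -- the eventual bound
    have hev : ∀ᶠ ρ in (Filter.atTop : Filter ℝ), ENNReal.ofReal t ≤ ⨅ x : X,
        Measure.count (Λ ∩ ball x ρ) / ∫⁻ y in ball x ρ, ENNReal.ofReal ((H.k y y).re) ∂μ := by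
      rw [Filter.eventually_atTop]
      refine ⟨max (T + s) r₀, fun ρ hρ => ?_⟩
      have hρT : T + s ≤ ρ := le_trans (le_max_left _ _) hρ
      have hρr₀ : r₀ ≤ ρ := le_trans (le_max_right _ _) hρ
      refine le_iInf fun x => ?_
      set tr : ℝ≥0∞ := ∫⁻ y in ball x ρ, ENNReal.ofReal ((H.k y y).re) ∂μ with htrdef
      set cnt : ℝ≥0∞ := Measure.count (Λ ∩ ball x ρ) with hcntdef
      -- basic facts about the trace
      have htr_lb : ENNReal.ofReal C₁ * μ (ball x ρ) ≤ tr := by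
        rw [htrdef, ← MeasureTheory.setLIntegral_const (ball x ρ) (ENNReal.ofReal C₁)]
        exact MeasureTheory.lintegral_mono fun z => ENNReal.ofReal_le_ofReal (hC₁' z)
      have htr_ub : tr ≤ ENNReal.ofReal C₂ * μ (ball x ρ) := by
        rw [htrdef, ← MeasureTheory.setLIntegral_const (ball x ρ) (ENNReal.ofReal C₂)]
        exact MeasureTheory.lintegral_mono fun z => ENNReal.ofReal_le_ofReal (hC₂' z)
      have hμfin : μ (ball x ρ) ≠ ⊤ := hballs x ρ
      have hμpos : 0 < μ (ball x ρ) := by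
        refine lt_of_lt_of_le hr₀ ?_
        refine le_trans (iInf_le _ x) (measure_mono (ball_subset_ball hρr₀))
      have htr_ne_top : tr ≠ ⊤ := by
        refine ne_top_of_le_ne_top ?_ htr_ub
        exact ENNReal.mul_ne_top ENNReal.ofReal_ne_top hμfin
      have htr_ne0 : tr ≠ 0 := by
        refine ne_of_gt (lt_of_lt_of_le ?_ htr_lb)
        exact ENNReal.mul_pos (by simp [hC₁]) hμpos.ne'
      -- core estimate
      have hcore := core_estimate H hA hB hlow hup hC₂' hεpos hHAPs x (ρ - s)
      rw [sub_add_cancel] at hcore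
      -- trace on the large ball vs the small ball
      have hsplit : tr ≤ (∫⁻ y in ball x (ρ - s), ENNReal.ofReal ((H.k y y).re) ∂μ)
          + ENNReal.ofReal C₂ * μ (ball x ρ \ ball x (ρ - s)) := by
        have hsubset : ball x ρ ⊆ ball x (ρ - s) ∪ (ball x ρ \ ball x (ρ - s)) := by
          intro y hy
          by_cases h : y ∈ ball x (ρ - s)
          · exact Set.mem_union_left _ h
          · exact Set.mem_union_right _ ⟨hy, h⟩
        have h1 : μ.restrict (ball x ρ) ≤
            μ.restrict (ball x (ρ - s)) + μ.restrict (ball x ρ \ ball x (ρ - s)) :=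
          le_trans (Measure.restrict_mono hsubset le_rfl) (Measure.restrict_union_le _ _)
        calc tr ≤ ∫⁻ y, ENNReal.ofReal ((H.k y y).re)
              ∂(μ.restrict (ball x (ρ - s)) + μ.restrict (ball x ρ \ ball x (ρ - s))) :=
              MeasureTheory.lintegral_mono' h1 le_rfl
          _ = (∫⁻ y in ball x (ρ - s), ENNReal.ofReal ((H.k y y).re) ∂μ)
              + ∫⁻ y in ball x ρ \ ball x (ρ - s), ENNReal.ofReal ((H.k y y).re) ∂μ :=
              MeasureTheory.lintegral_add_measure _ _ _
          _ ≤ _ := by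
              gcongr
              calc (∫⁻ y in ball x ρ \ ball x (ρ - s), ENNReal.ofReal ((H.k y y).re) ∂μ)
                  ≤ ∫⁻ _y in ball x ρ \ ball x (ρ - s), ENNReal.ofReal C₂ ∂μ :=
                    MeasureTheory.lintegral_mono fun z => ENNReal.ofReal_le_ofReal (hC₂' z)
                _ = ENNReal.ofReal C₂ * μ (ball x ρ \ ball x (ρ - s)) :=
                    MeasureTheory.setLIntegral_const _ _
      -- WAD annuli
      have hannuli : μ (ball x ρ \ ball x (ρ - s)) ≤ (mn : ℝ≥0∞) * δ' * μ (ball x ρ) := by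
        have hcover : ball x ρ \ ball x (ρ - s) ⊆
            ⋃ i ∈ Finset.range mn, (ball x ((ρ - s + i) + 1) \ ball x (ρ - s + i)) := by
          intro y hy
          have hy1 : dist y x < ρ := mem_ball.mp hy.1
          have hy2 : ρ - s ≤ dist y x := by
            by_contra hc
            push_neg at hc
            exact hy.2 (mem_ball.mpr hc)
          set i : ℕ := ⌊dist y x - (ρ - s)⌋₊ with hidef
          have hinn : 0 ≤ dist y x - (ρ - s) := by linarith
          have hilt : i < mn := by
            have h1 : dist y x - (ρ - s) < s := by linarith
            have h2 : dist y x - (ρ - s) < mn := lt_of_lt_of_le h1 hsmn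
            exact Nat.floor_lt hinn |>.mpr h2
          refine Set.mem_biUnion (Finset.mem_range.mpr hilt) ?_
          constructor
          · refine mem_ball.mpr ?_
            have := Nat.lt_floor_add_one (dist y x - (ρ - s))
            linarith [this]
          · intro hc
            have := mem_ball.mp hc
            have h3 := Nat.floor_le hinn
            rw [← hidef] at h3
            linarith
        have hshell : ∀ i : ℕ, i < mn →
            μ (ball x ((ρ - s + i) + 1) \ ball x (ρ - s + i)) ≤ δ' * μ (ball x ρ) := by
          intro i hi
          have hti : T ≤ ρ - s + i := by
            have : (0:ℝ) ≤ i := Nat.cast_nonneg i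
            linarith
          have hratio : μ (ball x ((ρ - s + i) + 1) \ ball x (ρ - s + i))
              / μ (ball x (ρ - s + i)) ≤ δ' :=
            le_trans (le_iSup (fun x : X => μ (ball x ((ρ - s + i) + 1) \ ball x (ρ - s + i))
              / μ (ball x (ρ - s + i))) x) (hT _ hti)
          have hball_le : μ (ball x (ρ - s + i)) ≤ μ (ball x ρ) := by
            apply measure_mono
            apply ball_subset_ball
            have h1 : (i : ℝ) + 1 ≤ mn := by exact_mod_cast hi
            linarith
          rcases eq_or_ne (μ (ball x (ρ - s + i))) 0 with hz | hz
          · -- then the annulus must have measure 0 as well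
            by_cases hann : μ (ball x ((ρ - s + i) + 1) \ ball x (ρ - s + i)) = 0
            · rw [hann]; exact zero_le
            · exfalso
              rw [hz, ENNReal.div_zero hann] at hratio
              exact (lt_of_le_of_lt hratio (by
                rw [hδ'def]; exact ENNReal.ofReal_lt_top)).ne rfl
          · have hfin' : μ (ball x (ρ - s + i)) ≠ ⊤ := hballs x _
            have h2 : μ (ball x ((ρ - s + i) + 1) \ ball x (ρ - s + i))
                ≤ δ' * μ (ball x (ρ - s + i)) := by
              rw [← ENNReal.div_le_iff hz hfin']
              exact hratio
            exact le_trans h2 (mul_le_mul_right hball_le δ')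
        calc μ (ball x ρ \ ball x (ρ - s))
            ≤ μ (⋃ i ∈ Finset.range mn, (ball x ((ρ - s + i) + 1) \ ball x (ρ - s + i))) :=
              measure_mono hcover
          _ ≤ ∑ i ∈ Finset.range mn, μ (ball x ((ρ - s + i) + 1) \ ball x (ρ - s + i)) :=
              measure_biUnion_finset_le _ _
          _ ≤ ∑ _i ∈ Finset.range mn, δ' * μ (ball x ρ) :=
              Finset.sum_le_sum fun i hi => hshell i (Finset.mem_range.mp hi)
          _ = (mn : ℝ≥0∞) * δ' * μ (ball x ρ) := by
              rw [Finset.sum_const, Finset.card_range, nsmul_eq_mul, mul_assoc]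
      -- assemble
      have hconst1 : ENNReal.ofReal (B * ε ^ 2 / A ^ 2) * μ (ball x (ρ - s))
          ≤ ENNReal.ofReal (C₁ * η / 2) * μ (ball x ρ) := by
        rw [hεsq]
        exact mul_le_mul_right (measure_mono (ball_subset_ball (by linarith))) _
      have hconst2 : ENNReal.ofReal C₂ * ((mn : ℝ≥0∞) * δ' * μ (ball x ρ))
          ≤ ENNReal.ofReal (C₁ * η / 2) * μ (ball x ρ) := by
        have hmnpos : (0:ℝ) < mn := by exact_mod_cast hmn1
        have h1 : ENNReal.ofReal C₂ * ((mn : ℝ≥0∞) * δ')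
            = ENNReal.ofReal (C₂ * (mn * (C₁ * η / (2 * C₂ * mn)))) := by
          rw [hδ'def, ← ENNReal.ofReal_natCast mn, ← ENNReal.ofReal_mul (by positivity),
            ← ENNReal.ofReal_mul hC₂pos.le]
        have h2 : C₂ * ((mn : ℝ) * (C₁ * η / (2 * C₂ * mn))) = C₁ * η / 2 := by
          field_simp
        rw [← mul_assoc, h1, h2]
      have hmain : tr ≤ cnt + ENNReal.ofReal η * tr := by
        calc tr ≤ (∫⁻ y in ball x (ρ - s), ENNReal.ofReal ((H.k y y).re) ∂μ)
              + ENNReal.ofReal C₂ * μ (ball x ρ \ ball x (ρ - s)) := hsplit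
          _ ≤ (cnt + ENNReal.ofReal (B * ε ^ 2 / A ^ 2) * μ (ball x (ρ - s)))
              + ENNReal.ofReal C₂ * ((mn : ℝ≥0∞) * δ' * μ (ball x ρ)) := by
              gcongr
          _ ≤ (cnt + ENNReal.ofReal (C₁ * η / 2) * μ (ball x ρ))
              + ENNReal.ofReal (C₁ * η / 2) * μ (ball x ρ) := by
              gcongr
          _ = cnt + (ENNReal.ofReal (C₁ * η / 2) + ENNReal.ofReal (C₁ * η / 2)) * μ (ball x ρ) := by
              rw [add_mul]
              ring
          _ = cnt + ENNReal.ofReal (C₁ * η) * μ (ball x ρ) := by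
              rw [← ENNReal.ofReal_add (by positivity) (by positivity)]
              norm_num
          _ = cnt + ENNReal.ofReal η * (ENNReal.ofReal C₁ * μ (ball x ρ)) := by
              rw [← mul_assoc, ← ENNReal.ofReal_mul hη.le]
              ring_nf
          _ ≤ cnt + ENNReal.ofReal η * tr := by
              gcongr
      have hcancel : ENNReal.ofReal t * tr ≤ cnt := by
        have h1 : ENNReal.ofReal t * tr + ENNReal.ofReal η * tr ≤ cnt + ENNReal.ofReal η * tr := by
          calc ENNReal.ofReal t * tr + ENNReal.ofReal η * tr
              = (ENNReal.ofReal t + ENNReal.ofReal η) * tr := (add_mul _ _ _).symm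
            _ = (ENNReal.ofReal (t + η)) * tr := by rw [ENNReal.ofReal_add ht0 hη.le]
            _ = 1 * tr := by rw [hηdef]; norm_num
            _ = tr := one_mul _
            _ ≤ cnt + ENNReal.ofReal η * tr := hmain
        have h2 : ENNReal.ofReal η * tr ≠ ⊤ :=
          ENNReal.mul_ne_top ENNReal.ofReal_ne_top htr_ne_top
        exact (ENNReal.add_le_add_iff_right h2).mp h1
      rw [ENNReal.le_div_iff_mul_le (Or.inl htr_ne0) (Or.inl htr_ne_top)]
      exact hcancel
    rw [Filter.liminf_eq]
    exact le_sSup hev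
  -- conclude
  by_contra hcon
  push_neg at hcon
  set c := liminf (fun r : ℝ => ⨅ x : X,
      Measure.count (Λ ∩ ball x r) / ∫⁻ y in ball x r, ENNReal.ofReal ((H.k y y).re) ∂μ)
      atTop with hcdef
  have hcne : c ≠ ⊤ := by
    intro hc
    rw [hc] at hcon
    exact (lt_irrefl _ (lt_of_lt_of_le hcon le_top))
  have hct : c.toReal < 1 := by
    have := ENNReal.toReal_lt_toReal hcne (ENNReal.one_ne_top)
    rw [ENNReal.toReal_one] at this
    exact this.mpr hcon
  set t : ℝ := (c.toReal + 1) / 2 with htdef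
  have ht0 : 0 ≤ t := by
    have := ENNReal.toReal_nonneg (a := c)
    rw [htdef]; linarith
  have ht1 : t < 1 := by rw [htdef]; linarith
  have hkey := key t ht0 ht1
  have hlt : c < ENNReal.ofReal t := by
    have h1 : c = ENNReal.ofReal c.toReal := (ENNReal.ofReal_toReal hcne).symm
    rw [h1]
    apply (ENNReal.ofReal_lt_ofReal_iff_of_nonneg ENNReal.toReal_nonneg).mpr
    rw [htdef]; linarith
  exact (lt_irrefl _ (lt_of_lt_of_le hlt hkey))

end Main

/-- Dimension-free form of the sampling density theorem. -/
theorem sampling_density_dimension_free (μ : Measure X) (H : L2RKHS X μ)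
    (hballs : FiniteBalls μ) (hNDB : NDB μ) (hWAD : WAD μ)
    (hD : H.AxiomD) (hWL : H.WL) (hHAP : H.HAP)
    (Λ : Set X) (hΛ : H.Sampling Λ) :
    1 ≤ liminf (fun r : ℝ => ⨅ x : X,
      Measure.count (Λ ∩ ball x r) / ∫⁻ y in ball x r, ENNReal.ofReal ((H.k y y).re) ∂μ)
      atTop := by
  exact sampling_density_dimension_free' μ H hballs hNDB hWAD hD hWL hHAP Λ hΛ
end
end

section
/- Let (X,d) be a metric space with a measure μ such that every ball has finite measure, satisfying the weak annular decay property: lim_{r→∞} sup_{x∈X} μ(B_{r+1}(x) ∖ B_r(x))/μ(B_r(x)) = 0. Then μ is locally doubling at large scales: there exists r₀ > 0 such that for all r ≥ r₀ there is a constant C_r > 0 with μ(B_{2r}(x)) ≤ C_r · μ(B_r(x)) for all x ∈ X; moreover one may take C_r = 2^{⌈r⌉}. -/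
open MeasureTheory Metric Filter Topology ENNReal

noncomputable section

variable {X : Type*} [MeasurableSpace X] [MetricSpace X]

/-- Weak annular decay implies that the measure is locally doubling at large
scales, with doubling constant `C_r = 2 ^ ⌈r⌉`. -/
theorem wad_locally_doubling (μ : Measure X) (hballs : FiniteBalls μ) (hWAD : WAD μ) :
    ∃ r₀ : ℝ, 0 < r₀ ∧ ∀ r : ℝ, r₀ ≤ r → ∀ x : X,
      μ (ball x (2 * r)) ≤ (2 : ℝ≥0∞) ^ ⌈r⌉₊ * μ (ball x r) := by
  have h1 : ∀ᶠ s in atTop,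
      (⨆ x : X, μ (ball x (s + 1) \ ball x s) / μ (ball x s)) < 1 :=
    hWAD.eventually_lt_const zero_lt_one
  obtain ⟨R, hR⟩ := eventually_atTop.mp h1
  have step : ∀ s, R ≤ s → ∀ x : X, μ (ball x (s + 1)) ≤ 2 * μ (ball x s) := by
    intro s hs x
    have hsup := hR s hs
    have hx : μ (ball x (s + 1) \ ball x s) / μ (ball x s) < 1 :=
      lt_of_le_of_lt
        (le_iSup (fun x : X => μ (ball x (s + 1) \ ball x s) / μ (ball x s)) x) hsup
    have hann : μ (ball x (s + 1) \ ball x s) ≤ μ (ball x s) := by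
      rcases eq_or_ne (μ (ball x s)) 0 with h0 | h0
      · by_contra h
        have hne : μ (ball x (s + 1) \ ball x s) ≠ 0 := by
          intro h'; exact h (h' ▸ (zero_le : (0 : ℝ≥0∞) ≤ μ (ball x s)))
        rw [h0, ENNReal.div_zero hne] at hx
        exact absurd hx (by simp)
      · have hfin := hballs x s
        rw [ENNReal.div_lt_iff (Or.inl h0) (Or.inl hfin)] at hx
        simpa using hx.le
    calc μ (ball x (s + 1)) ≤ μ (ball x (s + 1) \ ball x s ∪ ball x s) :=
          measure_mono (Set.subset_diff_union _ _)
      _ ≤ μ (ball x (s + 1) \ ball x s) + μ (ball x s) := measure_union_le _ _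
      _ ≤ μ (ball x s) + μ (ball x s) := add_le_add hann le_rfl
      _ = 2 * μ (ball x s) := (two_mul _).symm
  have iter : ∀ (k : ℕ) (r : ℝ), R ≤ r → ∀ x : X,
      μ (ball x (r + k)) ≤ 2 ^ k * μ (ball x r) := by
    intro k
    induction k with
    | zero => intro r hr x; simp
    | succ n ih =>
      intro r hr x
      have hstep : μ (ball x (r + n + 1)) ≤ 2 * μ (ball x (r + n)) :=
        step (r + n) (le_trans hr (le_add_of_nonneg_right (Nat.cast_nonneg n))) x
      calc μ (ball x (r + ((n + 1 : ℕ) : ℝ))) = μ (ball x (r + n + 1)) := by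
            push_cast; ring_nf
        _ ≤ 2 * μ (ball x (r + n)) := hstep
        _ ≤ 2 * (2 ^ n * μ (ball x r)) := by gcongr; exact ih r hr x
        _ = 2 ^ (n + 1) * μ (ball x r) := by ring
  refine ⟨max R 1, lt_of_lt_of_le zero_lt_one (le_max_right _ _), ?_⟩
  intro r hr x
  have hRr : R ≤ r := (le_max_left _ _).trans hr
  have h2r : 2 * r ≤ r + (⌈r⌉₊ : ℝ) := by
    have := Nat.le_ceil r; linarith
  calc μ (ball x (2 * r)) ≤ μ (ball x (r + ⌈r⌉₊)) := measure_mono (ball_subset_ball h2r)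
    _ ≤ 2 ^ ⌈r⌉₊ * μ (ball x r) := iter _ r hRr x
end
end

section
/- Let ℋ ⊆ L²(X,μ) be a reproducing kernel Hilbert space with kernel k, and let Λ ⊆ X be countable. Assume {k_λ : λ∈Λ} is a Riesz basis for a closed subspace V ⊆ ℋ with biorthogonal basis {g_λ : λ∈Λ} ⊆ V (i.e., ⟨k_λ, g_μ⟩ = δ_{λμ}). Then: (a) for every y ∈ X, the sum Σ_{λ∈Λ} k_λ(y) · conj(g_λ(y)) is real and satisfies 0 ≤ Σ_{λ∈Λ} k_λ(y) · conj(g_λ(y)) ≤ k(y,y); and (b) ⟨g_λ, k_λ⟩ = 1 for all λ ∈ Λ. -/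
open MeasureTheory Metric Filter Topology ENNReal
open scoped Classical

noncomputable section

/-- A reproducing kernel Hilbert space of functions contained in `L²(X,μ)`,
described by its carrier set of functions and its reproducing kernel `k`:
each `k_x = k(·,x)` belongs to the space and `f x = ⟨f, k_x⟩` (the `L²` inner
product) for every member `f`. -/
structure RKHSL2 (X : Type*) [MeasurableSpace X] (μ : MeasureTheory.Measure X) where
  carrier : Set (X → ℂ)
  k : X → X → ℂ
  memL2 : ∀ f ∈ carrier, MemLp f 2 μ
  add_mem : ∀ f ∈ carrier, ∀ g ∈ carrier, f + g ∈ carrier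
  smul_mem : ∀ (c : ℂ), ∀ f ∈ carrier, c • f ∈ carrier
  kernel_mem : ∀ x : X, (fun y => k y x) ∈ carrier
  reproducing : ∀ f ∈ carrier, ∀ x : X, f x = ∫ y, f y * (starRingEnd ℂ) (k y x) ∂μ

variable {X : Type*} [MeasurableSpace X] [MetricSpace X]

variable {μ : Measure X}

/-- Axiom (D): two-sided bounds on the diagonal of the kernel. -/
def RKHSL2.AxiomD (H : RKHSL2 X μ) : Prop :=
  ∃ C₁ C₂ : ℝ, 0 < C₁ ∧ 0 < C₂ ∧ ∀ x : X, C₁ ≤ (H.k x x).re ∧ (H.k x x).re ≤ C₂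

/-- Axiom (WL): weak localization of the kernel. -/
def RKHSL2.WL (H : RKHSL2 X μ) : Prop :=
  ∀ ε : ℝ, 0 < ε → ∃ r : ℝ, ∀ x : X,
    (∫⁻ y in (ball x r)ᶜ, (‖H.k x y‖₊ : ℝ≥0∞) ^ 2 ∂μ) < ENNReal.ofReal (ε ^ 2)

/-- `{k_λ : λ ∈ Λ}` is a Bessel sequence for `H`. -/
def RKHSL2.Bessel (H : RKHSL2 X μ) (Λ : Set X) : Prop :=
  ∃ C : ℝ, 0 < C ∧ ∀ f ∈ H.carrier,
    ∑' lam : Λ, (‖f lam‖₊ : ℝ≥0∞) ^ 2 ≤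
      ENNReal.ofReal C * ∫⁻ y, (‖f y‖₊ : ℝ≥0∞) ^ 2 ∂μ

/-- Axiom (HAP): the homogeneous approximation property. -/
def RKHSL2.HAP (H : RKHSL2 X μ) : Prop :=
  ∀ Λ : Set X, H.Bessel Λ → ∀ ε : ℝ, 0 < ε → ∃ r : ℝ, ∀ x : X,
    ∑' lam : ↥(Λ \ ball x r), (‖H.k x lam‖₊ : ℝ≥0∞) ^ 2 < ENNReal.ofReal (ε ^ 2)

/-- `Λ` is a set of stable sampling for `H`. -/
def RKHSL2.Sampling (H : RKHSL2 X μ) (Λ : Set X) : Prop :=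
  ∃ A B : ℝ, 0 < A ∧ 0 < B ∧ ∀ f ∈ H.carrier,
    ENNReal.ofReal A * (∫⁻ y, (‖f y‖₊ : ℝ≥0∞) ^ 2 ∂μ) ≤ ∑' lam : Λ, (‖f lam‖₊ : ℝ≥0∞) ^ 2 ∧
    ∑' lam : Λ, (‖f lam‖₊ : ℝ≥0∞) ^ 2 ≤ ENNReal.ofReal B * ∫⁻ y, (‖f y‖₊ : ℝ≥0∞) ^ 2 ∂μ

/-- `{k_λ : λ ∈ Λ}` is a Riesz sequence in `H` (equivalently stated via finitely
supported coefficient sequences). -/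
def RKHSL2.RieszSeq (H : RKHSL2 X μ) (Λ : Set X) : Prop :=
  ∃ A B : ℝ, 0 < A ∧ 0 < B ∧ ∀ (F : Finset Λ) (c : Λ → ℂ),
    A * ∑ lam ∈ F, ‖c lam‖ ^ 2 ≤ (∫ y, ‖∑ lam ∈ F, c lam * H.k y lam‖ ^ 2 ∂μ) ∧
    (∫ y, ‖∑ lam ∈ F, c lam * H.k y lam‖ ^ 2 ∂μ) ≤ B * ∑ lam ∈ F, ‖c lam‖ ^ 2

set_option linter.unusedSectionVars false
set_option maxHeartbeats 1000000
open scoped ComplexConjugate Classical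

noncomputable section AbstractRiesz

variable {E : Type*} [NormedAddCommGroup E] [InnerProductSpace ℂ E] [CompleteSpace E]
variable {Λ : Type*} {K G : Λ → E}

local notation "⟪" x ", " y "⟫" => @inner ℂ _ _ x y

lemma riesz_span_coeff (hbi : ∀ lam m : Λ, ⟪K lam, G m⟫ = if lam = m then 1 else 0)
    (c : Λ →₀ ℂ) (m : Λ) :
    ⟪G m, c.sum fun i a => a • K i⟫ = c m := by
  rw [Finsupp.sum, inner_sum]
  have h : ∀ i : Λ, ⟪G m, K i⟫ = if i = m then 1 else 0 := by
    intro i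
    rw [← inner_conj_symm, hbi i m]
    simp [apply_ite (starRingEnd ℂ)]
  calc (∑ i ∈ c.support, ⟪G m, c i • K i⟫)
      = ∑ i ∈ c.support, (if i = m then c i else 0) := by
        refine Finset.sum_congr rfl fun i _ => ?_
        rw [inner_smul_right, h i]
        by_cases hi : i = m <;> simp [hi]
    _ = if m ∈ c.support then c m else 0 := Finset.sum_ite_eq' _ _ _
    _ = c m := by
        by_cases hm : m ∈ c.support
        · simp [hm]
        · simp [hm, Finsupp.notMem_support_iff.mp hm]

/-- Coefficient bound on the closure of the span. -/
lemma riesz_coeff_bound {A : ℝ} (hA : 0 < A)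
    (hlow : ∀ (F : Finset Λ) (c : Λ → ℂ),
      A * ∑ lam ∈ F, ‖c lam‖ ^ 2 ≤ ‖∑ lam ∈ F, c lam • K lam‖ ^ 2)
    (hbi : ∀ lam m : Λ, ⟪K lam, G m⟫ = if lam = m then 1 else 0)
    {f : E} (hf : f ∈ closure (Submodule.span ℂ (Set.range K) : Set E)) (F : Finset Λ) :
    ∑ lam ∈ F, ‖⟪G lam, f⟫‖ ^ 2 ≤ A⁻¹ * ‖f‖ ^ 2 := by
  have hcl : IsClosed {x : E | ∑ lam ∈ F, ‖⟪G lam, x⟫‖ ^ 2 ≤ A⁻¹ * ‖x‖ ^ 2} := by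
    apply isClosed_le
    · exact continuous_finset_sum _ fun lam _ =>
        ((continuous_const.inner continuous_id).norm.pow 2)
    · exact continuous_const.mul (continuous_norm.pow 2)
  refine closure_minimal ?_ hcl hf
  intro x hx
  obtain ⟨c, rfl⟩ := Finsupp.mem_span_range_iff_exists_finsupp.mp hx
  simp only [Set.mem_setOf_eq]
  set u : E := c.sum fun i a => a • K i with hu
  have hco : ∀ m, ⟪G m, u⟫ = c m := riesz_span_coeff hbi c
  have hsum_eq : (∑ lam ∈ F ∪ c.support, (c : Λ → ℂ) lam • K lam) = u := by
    rw [hu, Finsupp.sum]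
    refine (Finset.sum_subset Finset.subset_union_right fun i _ hi => ?_).symm
    rw [Finsupp.notMem_support_iff.mp hi, zero_smul]
  have hb := hlow (F ∪ c.support) (fun lam => c lam)
  rw [hsum_eq] at hb
  have h1 : ∑ lam ∈ F, ‖⟪G lam, u⟫‖ ^ 2 ≤ ∑ lam ∈ F ∪ c.support, ‖(c : Λ → ℂ) lam‖ ^ 2 := by
    calc ∑ lam ∈ F, ‖⟪G lam, u⟫‖ ^ 2 = ∑ lam ∈ F, ‖(c : Λ → ℂ) lam‖ ^ 2 := by
          exact Finset.sum_congr rfl fun lam _ => by rw [hco]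
      _ ≤ _ := Finset.sum_le_sum_of_subset_of_nonneg Finset.subset_union_left
          fun i _ _ => by positivity
  calc ∑ lam ∈ F, ‖⟪G lam, u⟫‖ ^ 2 ≤ ∑ lam ∈ F ∪ c.support, ‖(c : Λ → ℂ) lam‖ ^ 2 := h1
    _ ≤ A⁻¹ * ‖u‖ ^ 2 := by
        rw [le_inv_mul_iff₀ hA]; exact hb

/-- Synthesis summability from ℓ² coefficients. -/
lemma riesz_synth_summable {B : ℝ} (hB : 0 < B)
    (hup : ∀ (F : Finset Λ) (c : Λ → ℂ),
      ‖∑ lam ∈ F, c lam • K lam‖ ^ 2 ≤ B * ∑ lam ∈ F, ‖c lam‖ ^ 2)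
    {c : Λ → ℂ} (hc : Summable fun lam => ‖c lam‖ ^ 2) :
    Summable fun lam => c lam • K lam := by
  rw [summable_iff_vanishing]
  intro e he
  obtain ⟨ε, hε, hball⟩ := Metric.mem_nhds_iff.mp he
  obtain ⟨s, hs⟩ := (summable_iff_vanishing.mp hc) (Metric.ball 0 (ε ^ 2 / B))
    (Metric.ball_mem_nhds _ (by positivity))
  refine ⟨s, fun t ht => hball ?_⟩
  have h1 := hs t ht
  rw [Metric.mem_ball, dist_zero_right, Real.norm_eq_abs] at h1
  have h2 : ∑ lam ∈ t, ‖c lam‖ ^ 2 < ε ^ 2 / B := lt_of_le_of_lt (le_abs_self _) h1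
  have h3 : ‖∑ lam ∈ t, c lam • K lam‖ ^ 2 < ε ^ 2 := by
    calc ‖∑ lam ∈ t, c lam • K lam‖ ^ 2 ≤ B * ∑ lam ∈ t, ‖c lam‖ ^ 2 := hup t c
      _ < B * (ε ^ 2 / B) := by exact (mul_lt_mul_iff_right₀ hB).mpr h2
      _ = ε ^ 2 := by field_simp
  rw [Metric.mem_ball, dist_zero_right]
  exact lt_of_pow_lt_pow_left₀ 2 hε.le h3

/-- Norm bound for the synthesized series. -/
lemma riesz_synth_norm {B : ℝ} (hB : 0 < B)
    (hup : ∀ (F : Finset Λ) (c : Λ → ℂ),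
      ‖∑ lam ∈ F, c lam • K lam‖ ^ 2 ≤ B * ∑ lam ∈ F, ‖c lam‖ ^ 2)
    {c : Λ → ℂ} (hc : Summable fun lam => ‖c lam‖ ^ 2)
    (hK : Summable fun lam => c lam • K lam) :
    ‖∑' lam, c lam • K lam‖ ^ 2 ≤ B * ∑' lam, ‖c lam‖ ^ 2 := by
  have ht : Filter.Tendsto (fun F : Finset Λ => ‖∑ lam ∈ F, c lam • K lam‖ ^ 2)
      Filter.atTop (nhds (‖∑' lam, c lam • K lam‖ ^ 2)) :=
    ((continuous_norm.pow 2).continuousAt).tendsto.comp hK.hasSum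
  refine le_of_tendsto ht (Filter.Eventually.of_forall fun F => ?_)
  calc ‖∑ lam ∈ F, c lam • K lam‖ ^ 2 ≤ B * ∑ lam ∈ F, ‖c lam‖ ^ 2 := hup F c
    _ ≤ B * ∑' lam, ‖c lam‖ ^ 2 := by
        apply mul_le_mul_of_nonneg_left _ hB.le
        exact Summable.sum_le_tsum F (fun i _ => by positivity) hc

/-- Expansion of a span element. -/
lemma riesz_span_expansion (hbi : ∀ lam m : Λ, ⟪K lam, G m⟫ = if lam = m then 1 else 0)
    {u : E} (hu : u ∈ (Submodule.span ℂ (Set.range K) : Set E)) :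
    HasSum (fun lam => ⟪G lam, u⟫ • K lam) u := by
  obtain ⟨c, rfl⟩ := Finsupp.mem_span_range_iff_exists_finsupp.mp hu
  have hco : ∀ m, ⟪G m, c.sum fun i a => a • K i⟫ = c m := riesz_span_coeff hbi c
  have h0 : ∀ lam ∉ c.support, ⟪G lam, c.sum fun i a => a • K i⟫ • K lam = 0 := by
    intro lam hlam
    rw [hco, Finsupp.notMem_support_iff.mp hlam, zero_smul]
  have := (hasSum_sum_of_ne_finset_zero h0 : HasSum _ _)
  convert this using 1
  conv_lhs => rw [Finsupp.sum]
  exact (Finset.sum_congr rfl fun lam _ => by rw [hco]).symm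

/-- Expansion of any element of the closure of the span. -/
lemma riesz_expansion {A B : ℝ} (hA : 0 < A) (hB : 0 < B)
    (hlow : ∀ (F : Finset Λ) (c : Λ → ℂ),
      A * ∑ lam ∈ F, ‖c lam‖ ^ 2 ≤ ‖∑ lam ∈ F, c lam • K lam‖ ^ 2)
    (hup : ∀ (F : Finset Λ) (c : Λ → ℂ),
      ‖∑ lam ∈ F, c lam • K lam‖ ^ 2 ≤ B * ∑ lam ∈ F, ‖c lam‖ ^ 2)
    (hbi : ∀ lam m : Λ, ⟪K lam, G m⟫ = if lam = m then 1 else 0)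
    {f : E} (hf : f ∈ closure (Submodule.span ℂ (Set.range K) : Set E)) :
    HasSum (fun lam => ⟪G lam, f⟫ • K lam) f := by
  -- summability machinery for any element of the closure
  have Scoef : ∀ {w : E}, w ∈ closure (Submodule.span ℂ (Set.range K) : Set E) →
      Summable fun lam => ‖⟪G lam, w⟫‖ ^ 2 := fun {w} hw =>
    summable_of_sum_le (fun lam => by positivity)
      (fun F => riesz_coeff_bound hA hlow hbi hw F)
  have Ssynth : ∀ {w : E}, w ∈ closure (Submodule.span ℂ (Set.range K) : Set E) →
      Summable fun lam => ⟪G lam, w⟫ • K lam := fun {w} hw =>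
    riesz_synth_summable hB hup (Scoef hw)
  -- the closure is a submodule
  have hsub : ∀ {w w' : E}, w ∈ closure (Submodule.span ℂ (Set.range K) : Set E) →
      w' ∈ closure (Submodule.span ℂ (Set.range K) : Set E) →
      w - w' ∈ closure (Submodule.span ℂ (Set.range K) : Set E) := by
    intro w w' hw hw'
    have h1 : w ∈ (Submodule.span ℂ (Set.range K)).topologicalClosure := by
      rwa [← Submodule.topologicalClosure_coe] at hw
    have h2 : w' ∈ (Submodule.span ℂ (Set.range K)).topologicalClosure := by
      rwa [← Submodule.topologicalClosure_coe] at hw'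
    have := Submodule.sub_mem _ h1 h2
    rwa [← Submodule.topologicalClosure_coe]
  -- key quantitative estimate
  have key : ∀ {w w' : E} (hw : w ∈ closure (Submodule.span ℂ (Set.range K) : Set E))
      (hw' : w' ∈ closure (Submodule.span ℂ (Set.range K) : Set E)),
      ‖(∑' lam, ⟪G lam, w⟫ • K lam) - (∑' lam, ⟪G lam, w'⟫ • K lam)‖ ≤
        Real.sqrt (B * A⁻¹) * ‖w - w'‖ := by
    intro w w' hw hw'
    have hdiff : (∑' lam, ⟪G lam, w⟫ • K lam) - (∑' lam, ⟪G lam, w'⟫ • K lam)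
        = ∑' lam, ⟪G lam, w - w'⟫ • K lam := by
      rw [← Summable.tsum_sub (Ssynth hw) (Ssynth hw')]
      congr 1; funext lam
      rw [inner_sub_right, sub_smul]
    have hmem := hsub hw hw'
    have hn2 : ‖∑' lam, ⟪G lam, w - w'⟫ • K lam‖ ^ 2 ≤
        B * ∑' lam, ‖⟪G lam, w - w'⟫‖ ^ 2 :=
      riesz_synth_norm hB hup (Scoef hmem) (Ssynth hmem)
    have hc2 : ∑' lam, ‖⟪G lam, w - w'⟫‖ ^ 2 ≤ A⁻¹ * ‖w - w'‖ ^ 2 :=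
      Summable.tsum_le_of_sum_le (Scoef hmem) (fun F => riesz_coeff_bound hA hlow hbi hmem F)
    rw [hdiff]
    have : ‖∑' lam, ⟪G lam, w - w'⟫ • K lam‖ ^ 2 ≤ (B * A⁻¹) * ‖w - w'‖ ^ 2 := by
      calc ‖∑' lam, ⟪G lam, w - w'⟫ • K lam‖ ^ 2 ≤ B * ∑' lam, ‖⟪G lam, w - w'⟫‖ ^ 2 := hn2
        _ ≤ B * (A⁻¹ * ‖w - w'‖ ^ 2) := mul_le_mul_of_nonneg_left hc2 hB.le
        _ = (B * A⁻¹) * ‖w - w'‖ ^ 2 := by ring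
    calc ‖∑' lam, ⟪G lam, w - w'⟫ • K lam‖
        = Real.sqrt (‖∑' lam, ⟪G lam, w - w'⟫ • K lam‖ ^ 2) := by
          rw [Real.sqrt_sq (norm_nonneg _)]
      _ ≤ Real.sqrt ((B * A⁻¹) * ‖w - w'‖ ^ 2) := Real.sqrt_le_sqrt this
      _ = Real.sqrt (B * A⁻¹) * ‖w - w'‖ := by
          rw [Real.sqrt_mul (by positivity), Real.sqrt_sq (norm_nonneg _)]
  -- approximation argument
  obtain ⟨u, hu_mem, hu_lim⟩ := mem_closure_iff_seq_limit.mp hf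
  have hspan_cl : ∀ n, u n ∈ closure (Submodule.span ℂ (Set.range K) : Set E) :=
    fun n => subset_closure (hu_mem n)
  have hTn : ∀ n, (∑' lam, ⟪G lam, u n⟫ • K lam) = u n :=
    fun n => (riesz_span_expansion hbi (hu_mem n)).tsum_eq
  set T := ∑' lam, ⟪G lam, f⟫ • K lam with hT
  have hbound : ∀ n, ‖T - u n‖ ≤ Real.sqrt (B * A⁻¹) * ‖f - u n‖ := by
    intro n
    have := key hf (hspan_cl n)
    rwa [hTn n] at this
  have hTlim : Filter.Tendsto u Filter.atTop (nhds T) := by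
    rw [tendsto_iff_norm_sub_tendsto_zero]
    have h0 : Filter.Tendsto (fun n => Real.sqrt (B * A⁻¹) * ‖f - u n‖)
        Filter.atTop (nhds 0) := by
      have : Filter.Tendsto (fun n => ‖f - u n‖) Filter.atTop (nhds 0) := by
        have := (tendsto_iff_norm_sub_tendsto_zero.mp hu_lim)
        simpa [norm_sub_rev] using this
      simpa using this.const_mul (Real.sqrt (B * A⁻¹))
    refine squeeze_zero (fun n => norm_nonneg _) (fun n => ?_) h0
    rw [norm_sub_rev]; exact hbound n
  have heq : T = f := tendsto_nhds_unique hTlim hu_lim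
  have h := (Ssynth hf).hasSum
  rw [← hT] at h
  rwa [heq] at h

/-- Main abstract result: the diagonal pairing sum. -/
theorem riesz_abstract_main {A B : ℝ} (hA : 0 < A) (hB : 0 < B)
    (hlow : ∀ (F : Finset Λ) (c : Λ → ℂ),
      A * ∑ lam ∈ F, ‖c lam‖ ^ 2 ≤ ‖∑ lam ∈ F, c lam • K lam‖ ^ 2)
    (hup : ∀ (F : Finset Λ) (c : Λ → ℂ),
      ‖∑ lam ∈ F, c lam • K lam‖ ^ 2 ≤ B * ∑ lam ∈ F, ‖c lam‖ ^ 2)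
    (hbi : ∀ lam m : Λ, ⟪K lam, G m⟫ = if lam = m then 1 else 0)
    (hG : ∀ m : Λ, G m ∈ closure (Submodule.span ℂ (Set.range K) : Set E))
    (v : E) :
    ∃ s : ℝ, HasSum (fun lam => ⟪v, K lam⟫ * ⟪G lam, v⟫) ((s : ℝ) : ℂ) ∧
      0 ≤ s ∧ s ≤ ‖v‖ ^ 2 := by
  set V := (Submodule.span ℂ (Set.range K)).topologicalClosure with hV
  haveI : CompleteSpace V :=
    (Submodule.isClosed_topologicalClosure _).completeSpace_coe
  set h : E := (V.orthogonalProjectionOnto v : E) with hh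
  have hhV : h ∈ closure (Submodule.span ℂ (Set.range K) : Set E) := by
    rw [← Submodule.topologicalClosure_coe]
    exact (V.orthogonalProjectionOnto v).2
  have hperp : v - h ∈ Vᗮ := by exact Submodule.sub_starProjection_mem_orthogonal (K := V) v
  -- ⟪G lam, v⟫ = ⟪G lam, h⟫
  have hGmem : ∀ m : Λ, G m ∈ V := by
    intro m
    rw [hV, ← SetLike.mem_coe, Submodule.topologicalClosure_coe]
    exact hG m
  have hcoef : ∀ m : Λ, ⟪G m, v⟫ = ⟪G m, h⟫ := by
    intro m
    have h0' : ⟪G m, v - h⟫ = 0 := (Submodule.mem_orthogonal _ _).mp hperp (G m) (hGmem m)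
    have := inner_sub_right (𝕜 := ℂ) (G m) v h
    rw [h0'] at this
    linear_combination -this
  -- expansion of h, mapped through ⟪v, ·⟫
  have hexp : HasSum (fun lam => ⟪G lam, h⟫ • K lam) h :=
    riesz_expansion hA hB hlow hup hbi hhV
  have hmap : HasSum (fun lam => ⟪v, ⟪G lam, h⟫ • K lam⟫) ⟪v, h⟫ :=
    hexp.mapL (innerSL ℂ v)
  have hmap' : HasSum (fun lam => ⟪v, K lam⟫ * ⟪G lam, v⟫) ⟪v, h⟫ := by
    refine hmap.congr_fun fun lam => ?_
    rw [inner_smul_right, hcoef lam]; ring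
  -- identify ⟪v, h⟫ = ‖h‖²
  have hvh : ⟪v, h⟫ = ((‖h‖ ^ 2 : ℝ) : ℂ) := by
    have h0 : ⟪h, v - h⟫ = 0 := (Submodule.mem_orthogonal _ _).mp hperp h
      (by rw [hV, ← SetLike.mem_coe, Submodule.topologicalClosure_coe]; exact hhV)
    have h1 : ⟪v - h, h⟫ = 0 := by rw [← inner_conj_symm, h0, map_zero]
    have h2 := inner_sub_left (𝕜 := ℂ) v h h
    rw [h1] at h2
    have h3 : ⟪h, h⟫ = ((‖h‖ ^ 2 : ℝ) : ℂ) := by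
      rw [inner_self_eq_norm_sq_to_K]; norm_cast
    rw [← h3]; linear_combination -h2
  refine ⟨‖h‖ ^ 2, by rwa [hvh] at hmap', by positivity, ?__⟩
  -- ‖h‖² ≤ ‖v‖² by Pythagoras
  have hpyth : ‖v‖ ^ 2 = ‖h‖ ^ 2 + ‖v - h‖ ^ 2 := by
    have h1 : ⟪h, v - h⟫ = 0 := (Submodule.mem_orthogonal _ _).mp hperp h
      (by rw [hV, ← SetLike.mem_coe, Submodule.topologicalClosure_coe]; exact hhV)
    have := norm_add_sq (𝕜 := ℂ) h (v - h)
    rw [h1] at this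
    simpa using this
  nlinarith [sq_nonneg ‖v - h‖]

end AbstractRiesz

/-- Identities for a Riesz basis of reproducing kernels `{k_λ}` of a closed
subspace `V ⊆ ℋ` with biorthogonal basis `{g_λ} ⊆ V`.  Membership of `g_λ` in
`V` (the closed span of the `k_λ`) is expressed by `L²`-approximation by finite
linear combinations of kernels, and biorthogonality `⟨k_λ, g_m⟩ = δ_{λ m}` is
expressed via the reproducing property as `g_m(λ) = δ_{λ m}`.  Then
(a) the sum `∑_λ k_λ(y) conj(g_λ(y))` is a real number `s` with `0 ≤ s ≤ k(y,y)`, and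
(b) `⟨g_λ, k_λ⟩ = 1` for all `λ`. -/
theorem riesz_biorthogonal_identities (μ : Measure X) (H : RKHSL2 X μ)
    (Λ : Set X) (hcount : Λ.Countable)
    (hriesz : H.RieszSeq Λ)
    (g : Λ → X → ℂ) (hgmem : ∀ lam : Λ, g lam ∈ H.carrier)
    (hgV : ∀ (lam : Λ) (ε : ℝ), 0 < ε → ∃ (F : Finset Λ) (c : Λ → ℂ),
      (∫⁻ y, (‖g lam y - ∑ m ∈ F, c m * H.k y m‖₊ : ℝ≥0∞) ^ 2 ∂μ) < ENNReal.ofReal ε)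
    (hbi : ∀ lam m : Λ, g m lam = if lam = m then (1 : ℂ) else 0) :
    (∀ y : X, ∃ s : ℝ,
      HasSum (fun lam : Λ => H.k y lam * (starRingEnd ℂ) (g lam y)) (s : ℂ) ∧
      0 ≤ s ∧ s ≤ (H.k y y).re) ∧
    (∀ lam : Λ, (∫ y, g lam y * (starRingEnd ℂ) (H.k y lam) ∂μ) = 1) := by
  classical
  obtain ⟨A, B, hA, hB, hRieszAB⟩ := hriesz
  haveI : Fact ((1 : ℝ≥0∞) ≤ 2) := ⟨one_le_two⟩
  -- Lp versions of the kernels and biorthogonal functions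
  set Kf : X → Lp ℂ 2 μ := fun x =>
    (H.memL2 (fun y => H.k y x) (H.kernel_mem x)).toLp (fun y => H.k y x) with hKf
  set Gf : Λ → Lp ℂ 2 μ := fun lam =>
    (H.memL2 (g lam) (hgmem lam)).toLp (g lam) with hGf
  -- reproducing property as inner products
  have hrepr : ∀ (f : X → ℂ) (hf : f ∈ H.carrier) (x : X),
      @inner ℂ _ _ (Kf x) ((H.memL2 f hf).toLp f) = f x := by
    intro f hf x
    rw [MeasureTheory.L2.inner_def]
    have h1 : (↑↑(Kf x) : X → ℂ) =ᵐ[μ] fun y => H.k y x :=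
      MeasureTheory.MemLp.coeFn_toLp _
    have h2 : (↑↑((H.memL2 f hf).toLp f) : X → ℂ) =ᵐ[μ] f :=
      MeasureTheory.MemLp.coeFn_toLp _
    have heq : (∫ y, (@inner ℂ _ _ ((Kf x : X → ℂ) y) (((H.memL2 f hf).toLp f : X → ℂ) y)) ∂μ)
        = ∫ y, f y * (starRingEnd ℂ) (H.k y x) ∂μ := by
      refine integral_congr_ae ?_
      filter_upwards [h1, h2] with y hy1 hy2
      rw [hy1, hy2, RCLike.inner_apply]
    rw [heq]
    exact (H.reproducing f hf x).symm
  -- norm as integral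
  have hnorm : ∀ (w : Lp ℂ 2 μ) (f : X → ℂ), (↑↑w =ᵐ[μ] f) →
      ‖w‖ ^ 2 = ∫ y, ‖f y‖ ^ 2 ∂μ := by
    intro w f hwf
    have h1 : (‖w‖ : ℝ) ^ 2 = RCLike.re (@inner ℂ _ _ w w) :=
      (inner_self_eq_norm_sq (𝕜 := ℂ) w).symm
    rw [h1, MeasureTheory.L2.inner_def,
      ← integral_re (MeasureTheory.L2.integrable_inner (𝕜 := ℂ) w w)]
    refine integral_congr_ae ?_
    filter_upwards [hwf] with y hy
    rw [inner_self_eq_norm_sq (𝕜 := ℂ), hy]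
  -- coeFn of finite linear combinations
  have hsum_ae : ∀ (F : Finset Λ) (c : Λ → ℂ),
      (↑↑(∑ lam ∈ F, c lam • Kf lam) : X → ℂ) =ᵐ[μ]
        fun y => ∑ lam ∈ F, c lam * H.k y lam := by
    intro F c
    induction F using Finset.induction_on with
    | empty =>
        simp only [Finset.sum_empty]
        filter_upwards [MeasureTheory.Lp.coeFn_zero (E := ℂ) (p := 2) (μ := μ)] with y hy
        simpa using hy
    | @insert a F ha ih =>
        have h1 := MeasureTheory.Lp.coeFn_add (c a • Kf a) (∑ lam ∈ F, c lam • Kf lam)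
        have h2 := MeasureTheory.Lp.coeFn_smul (c a) (Kf a)
        have h3 : (↑↑(Kf a) : X → ℂ) =ᵐ[μ] fun y => H.k y a :=
          MeasureTheory.MemLp.coeFn_toLp _
        rw [Finset.sum_insert ha]
        filter_upwards [h1, h2, h3, ih] with y hy1 hy2 hy3 hy4
        rw [Finset.sum_insert ha, hy1]
        simp only [Pi.add_apply]
        rw [hy4, hy2]
        simp only [Pi.smul_apply, smul_eq_mul]
        rw [hy3]
  -- Riesz bounds in Lp
  have hlow : ∀ (F : Finset Λ) (c : Λ → ℂ),
      A * ∑ lam ∈ F, ‖c lam‖ ^ 2 ≤ ‖∑ lam ∈ F, c lam • Kf lam‖ ^ 2 := by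
    intro F c
    have := (hRieszAB F c).1
    rwa [← hnorm _ _ (hsum_ae F c)] at this
  have hup : ∀ (F : Finset Λ) (c : Λ → ℂ),
      ‖∑ lam ∈ F, c lam • Kf lam‖ ^ 2 ≤ B * ∑ lam ∈ F, ‖c lam‖ ^ 2 := by
    intro F c
    have := (hRieszAB F c).2
    rwa [← hnorm _ _ (hsum_ae F c)] at this
  -- biorthogonality in Lp
  have hbiLp : ∀ lam m : Λ, @inner ℂ _ _ (Kf lam) (Gf m) = if lam = m then (1 : ℂ) else 0 := by
    intro lam m
    have h := hrepr (g m) (hgmem m) lam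
    have : @inner ℂ _ _ (Kf lam) (Gf m) = g m lam := h
    rw [this]
    exact hbi lam m
  -- membership of Gf in closure of span
  have hGcl : ∀ m : Λ, Gf m ∈ closure (Submodule.span ℂ (Set.range fun lam : Λ => Kf ↑lam) : Set (Lp ℂ 2 μ)) := by
    intro m
    rw [Metric.mem_closure_iff]
    intro ε hε
    obtain ⟨F, c, hFc⟩ := hgV m (ε ^ 2) (by positivity)
    refine ⟨∑ lam ∈ F, c lam • Kf lam, ?_, ?_⟩
    · exact Submodule.sum_mem _ fun lam _ =>
        Submodule.smul_mem _ _ (Submodule.subset_span ⟨lam, rfl⟩)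
    · rw [dist_eq_norm, MeasureTheory.Lp.norm_def]
      have hae : (↑↑(Gf m - ∑ lam ∈ F, c lam • Kf lam) : X → ℂ) =ᵐ[μ]
          fun y => g m y - ∑ lam ∈ F, c lam * H.k y lam := by
        filter_upwards [MeasureTheory.Lp.coeFn_sub (Gf m) (∑ lam ∈ F, c lam • Kf lam),
          MeasureTheory.MemLp.coeFn_toLp (H.memL2 (g m) (hgmem m)), hsum_ae F c]
          with y hy1 hy2 hy3
        rw [hy1]
        simp only [Pi.sub_apply]
        rw [hy3, hy2]
      rw [MeasureTheory.eLpNorm_congr_ae hae]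
      have hlt : MeasureTheory.eLpNorm (fun y => g m y - ∑ lam ∈ F, c lam * H.k y lam) 2 μ
          < ENNReal.ofReal ε := by
        rw [MeasureTheory.eLpNorm_eq_lintegral_rpow_enorm_toReal (by norm_num) (by norm_num)]
        simp only [enorm_eq_nnnorm]
        have h2 : (2 : ℝ≥0∞).toReal = (2 : ℝ) := by norm_num
        rw [h2]
        have hconv : (∫⁻ y, (‖g m y - ∑ lam ∈ F, c lam * H.k y lam‖₊ : ℝ≥0∞) ^ (2 : ℝ) ∂μ)
            = ∫⁻ y, (‖g m y - ∑ lam ∈ F, c lam * H.k y lam‖₊ : ℝ≥0∞) ^ (2 : ℕ) ∂μ := by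
          refine lintegral_congr fun y => ?_
          rw [← ENNReal.rpow_natCast]
          norm_num
        rw [hconv]
        calc (∫⁻ y, (‖g m y - ∑ lam ∈ F, c lam * H.k y lam‖₊ : ℝ≥0∞) ^ (2 : ℕ) ∂μ) ^ (1/(2:ℝ))
            < (ENNReal.ofReal (ε ^ 2)) ^ (1/(2:ℝ)) :=
              ENNReal.rpow_lt_rpow hFc (by norm_num)
          _ = ENNReal.ofReal ε := by
              rw [ENNReal.ofReal_rpow_of_pos (by positivity)]
              congr 1
              rw [← Real.rpow_natCast ε 2, ← Real.rpow_mul hε.le]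
              norm_num
      exact ENNReal.toReal_lt_of_lt_ofReal hlt
  constructor
  · -- part (a)
    intro y
    obtain ⟨s, hsum, hs0, hsle⟩ :=
      riesz_abstract_main (K := fun lam : Λ => Kf ↑lam) (G := Gf) hA hB hlow hup (fun lam m => by rw [hbiLp lam m]; congr) hGcl (Kf y)
    refine ⟨s, ?_, hs0, ?_⟩
    · refine hsum.congr_fun fun lam => ?_
      have e1 : @inner ℂ _ _ (Kf y) (Kf lam) = H.k y lam :=
        hrepr (fun z => H.k z lam) (H.kernel_mem lam) y
      have e2 : @inner ℂ _ _ (Gf lam) (Kf y) = (starRingEnd ℂ) (g lam y) := by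
        rw [← inner_conj_symm]
        congr 1
        exact hrepr (g lam) (hgmem lam) y
      rw [e1, e2]
    · have e3 : @inner ℂ _ _ (Kf y) (Kf y) = H.k y y := by
        have := hrepr (fun z => H.k z y) (H.kernel_mem y) y
        rw [hKf]
        exact this
      have e4 : ‖Kf y‖ ^ 2 = (H.k y y).re := by
        rw [← inner_self_eq_norm_sq (𝕜 := ℂ), e3, RCLike.re_to_complex]
      rw [← e4]
      exact hsle
  · -- part (b)
    intro lam
    have := (H.reproducing (g lam) (hgmem lam) lam).symm
    rw [this, hbi lam lam]
    simp
end
end
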